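/- arXiv:2602.15713 — 4 statements merged into one kernel-verified Lean document; each statement's English description precedes it below -/
import Mathlib

section
/- Let H be a complex Hilbert space and let T be a bounded linear operator on H. If the Hilbert space dimensions of the kernels N(T) and N(T*) are equal (as cardinals), then m(T) = m(T*). -/
noncomputable section

/-- The minimum modulus of a bounded operator. -/
def minMod {E F : Type*} [NormedAddCommGroup E] [NormedSpace ℂ E]
    [NormedAddCommGroup F] [NormedSpace ℂ F] (T : E →L[ℂ] F) : ℝ :=
  ⨅ x : {x : E // ‖x‖ = 1}, ‖T x.1‖

lemma minMod_nonneg {E F : Type*} [NormedAddCommGroup E] [NormedSpace ℂ E]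
    [NormedAddCommGroup F] [NormedSpace ℂ F] (T : E →L[ℂ] F) : 0 ≤ minMod T :=
  Real.iInf_nonneg fun _ => norm_nonneg _

lemma minMod_le {E F : Type*} [NormedAddCommGroup E] [NormedSpace ℂ E]
    [NormedAddCommGroup F] [NormedSpace ℂ F] (T : E →L[ℂ] F) (x : E) (hx : ‖x‖ = 1) :
    minMod T ≤ ‖T x‖ :=
  ciInf_le ⟨0, fun r ⟨y, hy⟩ => hy ▸ norm_nonneg _⟩ (⟨x, hx⟩ : {x : E // ‖x‖ = 1})

lemma minMod_mul_norm_le {E F : Type*} [NormedAddCommGroup E] [NormedSpace ℂ E]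
    [NormedAddCommGroup F] [NormedSpace ℂ F] (T : E →L[ℂ] F) (x : E) :
    minMod T * ‖x‖ ≤ ‖T x‖ := by
  rcases eq_or_ne x 0 with rfl | hx
  · simp
  · have hnx : ‖x‖ ≠ 0 := norm_ne_zero_iff.mpr hx
    have h1 : ‖(‖x‖⁻¹ : ℂ) • x‖ = 1 := by
      simp [norm_smul, inv_mul_cancel₀ hnx]
    have := minMod_le T _ h1
    rw [map_smul, norm_smul] at this
    simp only [norm_inv, map_inv₀, Complex.norm_real, norm_norm] at this
    have hpos : (0:ℝ) < ‖x‖ := lt_of_le_of_ne (norm_nonneg x) (Ne.symm hnx)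
    calc minMod T * ‖x‖ ≤ (‖x‖⁻¹ * ‖T x‖) * ‖x‖ := by
          exact mul_le_mul_of_nonneg_right this (norm_nonneg x)
      _ = ‖T x‖ := by field_simp

lemma minMod_eq_zero_of_ker {E F : Type*} [NormedAddCommGroup E] [NormedSpace ℂ E]
    [NormedAddCommGroup F] [NormedSpace ℂ F] (T : E →L[ℂ] F)
    (hker : LinearMap.ker (T : E →ₗ[ℂ] F) ≠ ⊥) : minMod T = 0 := by
  obtain ⟨x, hxmem, hx0⟩ := (Submodule.ne_bot_iff _).mp hker
  have hTx : T x = 0 := hxmem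
  have hnx : ‖x‖ ≠ 0 := norm_ne_zero_iff.mpr hx0
  have h1 : ‖(‖x‖⁻¹ : ℂ) • x‖ = 1 := by simp [norm_smul, inv_mul_cancel₀ hnx]
  have := minMod_le T _ h1
  rw [map_smul, hTx, smul_zero, norm_zero] at this
  exact le_antisymm this (minMod_nonneg T)

open ContinuousLinearMap in
lemma minMod_adjoint_le {H : Type*} [NormedAddCommGroup H] [InnerProductSpace ℂ H]
    [CompleteSpace H] (T : H →L[ℂ] H) (hT : LinearMap.ker (T : H →ₗ[ℂ] H) = ⊥) :
    minMod (adjoint T) ≤ minMod T := by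
  set S := adjoint T with hS
  set c := minMod S with hc
  rcases isEmpty_or_nonempty {x : H // ‖x‖ = 1} with hemp | hne
  · rw [hc]; simp only [minMod, Real.iInf_of_isEmpty]
    exact le_rfl
  rcases eq_or_lt_of_le (minMod_nonneg S) with h0 | hpos
  · rw [hc, ← h0]; exact minMod_nonneg T
  -- S is bounded below by c, hence antilipschitz, closed range
  have hbdd : ∀ y, c * ‖y‖ ≤ ‖S y‖ := fun y => minMod_mul_norm_le S y
  have hanti : AntilipschitzWith (⟨c, le_of_lt hpos⟩ : NNReal)⁻¹ S := by
    refine S.antilipschitz_of_bound fun y => ?_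
    change ‖y‖ ≤ c⁻¹ * ‖S y‖
    rw [le_inv_mul_iff₀ hpos]
    exact hbdd y
  have hclosed : IsClosed (Set.range S) := hanti.isClosed_range S.uniformContinuous
  -- range S is dense since ker T = ⊥
  have horth : (LinearMap.range (S : H →ₗ[ℂ] H))ᗮ = ⊥ := by
    rw [Submodule.eq_bot_iff]
    intro y hy
    have hTy : T y = 0 := by
      have h2 : ∀ x : H, inner ℂ x (T y) = (0 : ℂ) := by
        intro x
        have h3 := hy (S x) (LinearMap.mem_range_self _ x)
        rw [adjoint_inner_left] at h3
        exact h3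
      have := h2 (T y)
      rwa [inner_self_eq_zero] at this
    exact (Submodule.eq_bot_iff _).mp hT y hTy
  have hrange : LinearMap.range (S : H →ₗ[ℂ] H) = ⊤ := by
    have hcl : (LinearMap.range (S : H →ₗ[ℂ] H)).topologicalClosure = LinearMap.range (S : H →ₗ[ℂ] H) :=
      IsClosed.submodule_topologicalClosure_eq hclosed
    have : (LinearMap.range (S : H →ₗ[ℂ] H))ᗮᗮ = ⊤ := by rw [horth, Submodule.bot_orthogonal_eq_top]
    rwa [Submodule.orthogonal_orthogonal_eq_closure, hcl] at this
  -- now show c ≤ ‖T x‖ for every unit x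
  refine le_ciInf fun ⟨x, hx⟩ => ?_
  obtain ⟨y, hy⟩ := (LinearMap.range_eq_top.mp hrange) x
  replace hy : S y = x := hy
  have hy1 : ‖S y‖ = 1 := by rw [hy, hx]
  have hynorm : c * ‖y‖ ≤ 1 := by rw [← hy1]; exact hbdd y
  have hinner : (1 : ℝ) ≤ ‖T x‖ * ‖y‖ := by
    have h1 : (inner ℂ x x : ℂ) = inner ℂ (T x) y := by
      rw [← adjoint_inner_right T x y, hy]
    have h2 : ‖(inner ℂ x x : ℂ)‖ = 1 := by
      rw [inner_self_eq_norm_sq_to_K, hx]; norm_num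
    calc (1 : ℝ) = ‖(inner ℂ x x : ℂ)‖ := h2.symm
      _ = ‖(inner ℂ (T x) y : ℂ)‖ := by rw [h1]
      _ ≤ ‖T x‖ * ‖y‖ := norm_inner_le_norm _ _
  -- from c * ‖y‖ ≤ 1 and 1 ≤ ‖T x‖ * ‖y‖, get c ≤ ‖T x‖
  have hy0 : 0 < ‖y‖ := by
    rcases (norm_nonneg y).lt_or_eq with hlt | heq
    · exact hlt
    · exfalso; rw [← heq, mul_zero] at hinner; linarith
  have hchain : c * ‖y‖ ≤ ‖T x‖ * ‖y‖ := hynorm.trans hinner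
  exact le_of_mul_le_mul_right hchain hy0

/-- If `dim N(T) = dim N(T*)` (as cardinals), then `m(T) = m(T*)`. -/
theorem minMod_eq_minMod_adjoint_of_rank_ker_eq
    {H : Type*} [NormedAddCommGroup H] [InnerProductSpace ℂ H] [CompleteSpace H]
    (T : H →L[ℂ] H)
    (h : Module.rank ℂ (LinearMap.ker (T : H →ₗ[ℂ] H))
        = Module.rank ℂ (LinearMap.ker ((ContinuousLinearMap.adjoint T : H →L[ℂ] H) : H →ₗ[ℂ] H))) :
    minMod T = minMod (ContinuousLinearMap.adjoint T) := by
  by_cases hker : LinearMap.ker (T : H →ₗ[ℂ] H) = ⊥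
  · have hker' : LinearMap.ker ((ContinuousLinearMap.adjoint T : H →L[ℂ] H) : H →ₗ[ℂ] H) = ⊥ := by
      rw [← Submodule.rank_eq_zero, ← h, Submodule.rank_eq_zero]
      exact hker
    have h1 := minMod_adjoint_le T hker
    have h2 := minMod_adjoint_le (ContinuousLinearMap.adjoint T) hker'
    rw [ContinuousLinearMap.adjoint_adjoint] at h2
    exact le_antisymm h2 h1
  · have hker' : LinearMap.ker ((ContinuousLinearMap.adjoint T : H →L[ℂ] H) : H →ₗ[ℂ] H) ≠ ⊥ := fun hb =>
      hker (by rw [← Submodule.rank_eq_zero, h, Submodule.rank_eq_zero]; exact hb)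
    rw [minMod_eq_zero_of_ker T hker, minMod_eq_zero_of_ker _ hker']
end
end

section
/- Let H be a complex Hilbert space and let T be a bounded linear operator on H that is complex symmetric, i.e., there exists a conjugation C on H with T = C T* C. Then: (1) m(T) = m(T*); (2) T is bounded below if and only if T is invertible in B(H); (3) m(T) > 0 if and only if T is invertible in B(H). -/
noncomputable section

/-- For a complex symmetric operator `T = C T* C` (with `C` a conjugation,
i.e. a conjugate-linear isometric involution): `m(T) = m(T*)`; `T` is bounded
below iff it is invertible; and `m(T) > 0` iff `T` is invertible. -/
theorem complex_symmetric_minMod_boundedBelow_invertible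
    {H : Type*} [NormedAddCommGroup H] [InnerProductSpace ℂ H] [CompleteSpace H]
    [Nontrivial H] (T : H →L[ℂ] H) (C : H → H)
    (hCadd : ∀ x y, C (x + y) = C x + C y)
    (hCsmul : ∀ (c : ℂ) x, C (c • x) = (starRingEnd ℂ c) • C x)
    (hCnorm : ∀ x, ‖C x‖ = ‖x‖)
    (hCinv : ∀ x, C (C x) = x)
    (hT : ∀ x, T x = C (ContinuousLinearMap.adjoint T (C x))) :
    minMod T = minMod (ContinuousLinearMap.adjoint T)
    ∧ ((∃ c : ℝ, 0 < c ∧ ∀ x, c * ‖x‖ ≤ ‖T x‖) ↔ IsUnit T)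
    ∧ (0 < minMod T ↔ IsUnit T) := by
  set A := ContinuousLinearMap.adjoint T with hA
  -- adjoint formula
  have hadj : ∀ y, A y = C (T (C y)) := by
    intro y
    have h1 := hT (C y)
    rw [hCinv] at h1
    rw [h1, hCinv]
  have hnT : ∀ x, ‖T x‖ = ‖A (C x)‖ := fun x => by rw [hT x, hCnorm]
  have hnA : ∀ x, ‖A x‖ = ‖T (C x)‖ := fun x => by rw [hadj x, hCnorm]
  -- Part 1
  have part1 : minMod T = minMod A := by
    unfold minMod
    rw [iInf, iInf]
    congr 1
    ext r
    constructor
    · rintro ⟨x, rfl⟩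
      exact ⟨⟨C x.1, by rw [hCnorm, x.2]⟩, (hnT x.1).symm⟩
    · rintro ⟨x, rfl⟩
      exact ⟨⟨C x.1, by rw [hCnorm, x.2]⟩, (hnA x.1).symm⟩
  -- Part 2
  have part2 : (∃ c : ℝ, 0 < c ∧ ∀ x, c * ‖x‖ ≤ ‖T x‖) ↔ IsUnit T := by
    constructor
    · rintro ⟨c, hc, hbd⟩
      have hbdA : ∀ x, c * ‖x‖ ≤ ‖A x‖ := fun x => by
        rw [hnA x]
        calc c * ‖x‖ = c * ‖C x‖ := by rw [hCnorm]
          _ ≤ ‖T (C x)‖ := hbd _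
      have hker : LinearMap.ker (T : H →ₗ[ℂ] H) = ⊥ := by
        rw [LinearMap.ker_eq_bot']
        intro x hx
        have h2 := hbd x
        rw [show T x = 0 from hx, norm_zero] at h2
        have : ‖x‖ = 0 := le_antisymm (by nlinarith [norm_nonneg x]) (norm_nonneg x)
        exact norm_eq_zero.mp this
      have hanti : AntilipschitzWith (⟨c⁻¹, by positivity⟩ : NNReal) T :=
        T.antilipschitz_of_bound fun x => by
          show ‖x‖ ≤ c⁻¹ * ‖T x‖
          rw [← mul_le_mul_iff_of_pos_left hc, ← mul_assoc, mul_inv_cancel₀ hc.ne', one_mul]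
          exact hbd x
      have hclosed : IsClosed (LinearMap.range (T : H →ₗ[ℂ] H) : Set H) := by
        have : (LinearMap.range (T : H →ₗ[ℂ] H) : Set H) = Set.range T := by
          ext x; simp [LinearMap.mem_range]
        rw [this]
        exact hanti.isClosed_range T.uniformContinuous
      have : CompleteSpace (LinearMap.range (T : H →ₗ[ℂ] H)) := hclosed.completeSpace_coe
      have hrange : LinearMap.range (T : H →ₗ[ℂ] H) = ⊤ := by
        rw [← Submodule.orthogonal_eq_bot_iff]
        rw [Submodule.eq_bot_iff]
        intro y hy
        have hAy : A y = 0 := by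
          rw [← inner_self_eq_zero (𝕜 := ℂ) (x := A y)]
          rw [hA, ContinuousLinearMap.adjoint_inner_left]
          exact (Submodule.mem_orthogonal' _ y).mp hy _ (LinearMap.mem_range_self _ _)
        have := hbdA y
        rw [hAy, norm_zero] at this
        have hy0 : ‖y‖ = 0 := le_antisymm (by nlinarith [norm_nonneg y]) (norm_nonneg y)
        exact norm_eq_zero.mp hy0
      let e := ContinuousLinearEquiv.ofBijective T hker hrange
      have hecoe : (e : H →L[ℂ] H) = T := rfl
      refine ⟨⟨T, (e.symm : H →L[ℂ] H), ?_, ?_⟩, rfl⟩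
      · ext x
        show T (e.symm x) = x
        conv_lhs => rw [← hecoe]
        exact e.apply_symm_apply x
      · ext x
        show e.symm (T x) = x
        conv_lhs => rw [← hecoe]
        exact e.symm_apply_apply x
    · rintro ⟨u, hu⟩
      set S : H →L[ℂ] H := (↑u⁻¹ : H →L[ℂ] H) with hS
      have hST : ∀ x, S (T x) = x := by
        intro x
        have h1 : S (T x) = ((u⁻¹ * u : (H →L[ℂ] H)ˣ) : H →L[ℂ] H) x := by
          rw [Units.val_mul, hu]; rfl
        rw [h1, inv_mul_cancel u]; rfl
      have hSpos : 0 < ‖S‖ := by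
        rcases exists_ne (0 : H) with ⟨x, hx⟩
        have : S (T x) = x := hST x
        have hS0 : S ≠ 0 := by
          intro h
          rw [h] at this
          exact hx (by simpa using this.symm)
        exact norm_pos_iff.mpr hS0
      refine ⟨‖S‖⁻¹, by positivity, fun x => ?_⟩
      have : ‖x‖ ≤ ‖S‖ * ‖T x‖ := by
        calc ‖x‖ = ‖S (T x)‖ := by rw [hST]
          _ ≤ ‖S‖ * ‖T x‖ := S.le_opNorm _
      rw [inv_mul_le_iff₀ hSpos] at *
      linarith [this]
  refine ⟨part1, part2, ?_⟩
  -- Part 3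
  have hne : Nonempty {x : H // ‖x‖ = 1} := by
    obtain ⟨x, hx⟩ := exists_norm_eq H (zero_le_one)
    exact ⟨⟨x, hx⟩⟩
  have hbdd : BddBelow (Set.range fun x : {x : H // ‖x‖ = 1} => ‖T x.1‖) := by
    refine ⟨0, ?_⟩
    rintro r ⟨y, rfl⟩
    exact norm_nonneg _
  constructor
  · intro hpos
    apply part2.mp
    refine ⟨minMod T, hpos, fun x => ?_⟩
    rcases eq_or_ne x 0 with rfl | hx
    · simp
    · have hxn : ‖x‖ ≠ 0 := norm_ne_zero_iff.mpr hx
      set u : H := ‖x‖⁻¹ • x with hu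
      have hu1 : ‖u‖ = 1 := by
        rw [hu, norm_smul, norm_inv, norm_norm, inv_mul_cancel₀ hxn]
      have h1 : minMod T ≤ ‖T u‖ := ciInf_le hbdd ⟨u, hu1⟩
      have h2 : ‖T u‖ = ‖x‖⁻¹ * ‖T x‖ := by
        rw [hu, T.map_smul_of_tower, norm_smul, norm_inv, norm_norm]
      rw [h2] at h1
      have := mul_le_mul_of_nonneg_right h1 (norm_nonneg x)
      rwa [inv_mul_eq_div, div_mul_cancel₀ _ hxn] at this
  · intro hunit
    obtain ⟨c, hc, hbd⟩ := part2.mpr hunit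
    have : c ≤ minMod T := by
      apply le_ciInf
      intro x
      calc c = c * ‖x.1‖ := by rw [x.2, mul_one]
        _ ≤ ‖T x.1‖ := hbd x.1
    linarith
end
end

section
/- Let u be a nonconstant inner function and let S_u : K_u → K_u be the compressed shift, i.e., the truncated Toeplitz operator with symbol e₁ (S_u f = P_{K_u}(e₁ · f) for f ∈ K_u). Then m(S_u) = |u(0)| = m(S_u*), and both S_u and S_u* attain their minimum modulus. -/
open MeasureTheory Complex
open scoped InnerProductSpace ENNReal

noncomputable section

namespace DTTO

instance fact2pi : Fact (0 < 2 * Real.pi) := ⟨by positivity⟩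

/-- The circle, realized as `ℝ / 2πℤ`. -/
abbrev 𝕋c := AddCircle (2 * Real.pi)

/-- Normalized Haar (Lebesgue) measure on the circle. -/
abbrev μT : Measure 𝕋c := AddCircle.haarAddCircle

/-- `L²(𝕋)`. -/
abbrev L2 := Lp ℂ 2 μT

/-- `L∞(𝕋)`. -/
abbrev Linf := Lp ℂ ⊤ μT

lemma memL2_smul (φ : Linf) (f : L2) : MemLp (⇑φ • ⇑f) 2 μT :=
  (Lp.memLp f).smul (Lp.memLp φ)

/-- Multiplication operator `M_φ : L² → L²` by a function `φ ∈ L∞`. -/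
def Mmul (φ : Linf) : L2 →L[ℂ] L2 :=
  LinearMap.mkContinuous
    { toFun := fun f => (memL2_smul φ f).toLp _
      map_add' := fun f g => by
        refine Lp.ext ?_
        filter_upwards [MemLp.coeFn_toLp (memL2_smul φ (f + g)),
          MemLp.coeFn_toLp (memL2_smul φ f), MemLp.coeFn_toLp (memL2_smul φ g),
          Lp.coeFn_add f g,
          Lp.coeFn_add ((memL2_smul φ f).toLp _) ((memL2_smul φ g).toLp _)] with
            x h1 h2 h3 h4 h5
        rw [h1, h5]
        simp only [Pi.add_apply, h2, h3]
        simp only [Pi.smul_apply', h4, Pi.add_apply, smul_add]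
      map_smul' := fun c f => by
        refine Lp.ext ?_
        filter_upwards [MemLp.coeFn_toLp (memL2_smul φ (c • f)),
          MemLp.coeFn_toLp (memL2_smul φ f),
          Lp.coeFn_smul c f,
          Lp.coeFn_smul c ((memL2_smul φ f).toLp _)] with x h1 h2 h3 h4
        rw [h1, RingHom.id_apply, h4]
        simp only [Pi.smul_apply, Pi.smul_apply', h2, h3]
        exact smul_comm _ _ _ }
    ‖φ‖ (fun f => by
      simp only [LinearMap.coe_mk, AddHom.coe_mk]
      rw [Lp.norm_toLp, Lp.norm_def, Lp.norm_def]
      rw [← ENNReal.toReal_mul]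
      refine ENNReal.toReal_mono ?_ ?_
      · exact ENNReal.mul_ne_top (Lp.eLpNorm_ne_top φ) (Lp.eLpNorm_ne_top f)
      · exact eLpNorm_smul_le_eLpNorm_top_mul_eLpNorm 2 (Lp.aestronglyMeasurable f) ⇑φ)

/-- The canonical inclusion `L∞ ⊆ L²` (the measure is finite). -/
def toL2 (φ : Linf) : L2 := ((Lp.memLp φ).mono_exponent le_top).toLp _

/-- The Hardy space `H²`, the closed linear span in `L²` of the exponentials `e_n`, `n ≥ 0`. -/
def H2 : Submodule ℂ L2 :=
  (Submodule.span ℂ (Set.range fun n : ℕ => (fourierLp 2 (n : ℤ) : L2))).topologicalClosure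

instance : CompleteSpace H2 := (Submodule.isClosed_topologicalClosure _).completeSpace_coe

/-- `H²₋ = L² ⊖ H²`. -/
def Hminus : Submodule ℂ L2 := H2ᗮ

instance : CompleteSpace Hminus := (Submodule.isClosed_orthogonal _).completeSpace_coe

/-- `H∞ = H² ∩ L∞`. -/
def MemHinf (φ : Linf) : Prop := toL2 φ ∈ H2

/-- An inner function: an element of `H² ∩ L∞` of modulus one a.e. -/
structure IsInnerFn (u : Linf) : Prop where
  memH2 : MemHinf u
  unimod : ∀ᵐ z ∂μT, ‖u z‖ = 1

/-- `u` is nonconstant (not a.e. equal to a constant). -/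
def Nonconst (u : Linf) : Prop := ¬ ∃ c : ℂ, (⇑u : 𝕋c → ℂ) =ᵐ[μT] fun _ => c

/-- The subspace `uH²` of `L²`. -/
def uH2 (u : Linf) : Submodule ℂ L2 := H2.map (Mmul u).toLinearMap

/-- The model space `K_u = H² ⊖ uH² = H² ∩ (uH²)ᗮ`. -/
def Ku (u : Linf) : Submodule ℂ L2 := H2 ⊓ (uH2 u)ᗮ

lemma isClosed_Ku (u : Linf) : IsClosed ((Ku u : Set L2)) := by
  have h : (Ku u : Set L2) = (H2 : Set L2) ∩ ((uH2 u)ᗮ : Set L2) := rfl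
  rw [h]
  exact (Submodule.isClosed_topologicalClosure _).inter (Submodule.isClosed_orthogonal _)

instance (u : Linf) : CompleteSpace (Ku u) := (isClosed_Ku u).completeSpace_coe

/-- `K_u^⊥ = L² ⊖ K_u`. -/
def KuP (u : Linf) : Submodule ℂ L2 := (Ku u)ᗮ

instance (u : Linf) : CompleteSpace (KuP u) := (Submodule.isClosed_orthogonal _).completeSpace_coe

/-- Dual truncated Toeplitz operator `D_φ` on `K_u^⊥`. -/
def Dop (u φ : Linf) : KuP u →L[ℂ] KuP u :=
  Submodule.orthogonalProjectionOnto (KuP u) ∘L Mmul φ ∘L (KuP u).subtypeL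

/-- Truncated Toeplitz operator `A_φ` on `K_u`. -/
def Aop (u φ : Linf) : Ku u →L[ℂ] Ku u :=
  Submodule.orthogonalProjectionOnto (Ku u) ∘L Mmul φ ∘L (Ku u).subtypeL

/-- The operator `B_φ : K_u → K_u^⊥`, `B_φ f = (I - P_{K_u})(φ f)`. -/
def Bop (u φ : Linf) : Ku u →L[ℂ] KuP u :=
  Submodule.orthogonalProjectionOnto (KuP u) ∘L Mmul φ ∘L (Ku u).subtypeL

/-- Toeplitz operator `T_φ : H² → H²`. -/
def Top (φ : Linf) : H2 →L[ℂ] H2 :=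
  Submodule.orthogonalProjectionOnto H2 ∘L Mmul φ ∘L H2.subtypeL

/-- Hankel operator `H_φ : H² → H²₋`. -/
def Hop (φ : Linf) : H2 →L[ℂ] Hminus :=
  Submodule.orthogonalProjectionOnto Hminus ∘L Mmul φ ∘L H2.subtypeL

/-- The exponential `e₁(ζ) = ζ` as an element of `L∞`. -/
def e1 : Linf := fourierLp ⊤ 1

/-- The exponential `e₋₁(ζ) = ζ̄` as an element of `L∞`. -/
def eneg1 : Linf := fourierLp ⊤ (-1)

/-- The operator `Q : H²₋ → H²₋`, `Q g = P₋(e₁ g)`. -/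
def Qop : Hminus →L[ℂ] Hminus :=
  Submodule.orthogonalProjectionOnto Hminus ∘L Mmul e1 ∘L Hminus.subtypeL

/-- `u(0)`, the 0-th Fourier coefficient. -/
def coef0 (u : Linf) : ℂ := fourierCoeff (⇑u) 0

/-- Minimum modulus of a bounded operator. -/
def minMod {E F : Type*} [NormedAddCommGroup E] [NormedSpace ℂ E]
    [NormedAddCommGroup F] [NormedSpace ℂ F] (T : E →L[ℂ] F) : ℝ :=
  ⨅ x : {x : E // ‖x‖ = 1}, ‖T x.1‖

/-- Complex conjugation on `L∞`. -/
lemma memLinf_star (φ : Linf) : MemLp (fun z => (starRingEnd ℂ) (φ z)) ⊤ μT := by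
  refine ⟨continuous_star.comp_aestronglyMeasurable (Lp.aestronglyMeasurable φ), ?_⟩
  rw [eLpNorm_congr_norm_ae (g := ⇑φ) (Filter.Eventually.of_forall fun z => norm_star _)]
  exact Lp.eLpNorm_lt_top φ

/-- The complex conjugate `φ̄ ∈ L∞` of `φ ∈ L∞`. -/
def conjL (φ : Linf) : Linf := (memLinf_star φ).toLp _

lemma memLinf_mul (φ ψ : Linf) : MemLp (⇑φ • ⇑ψ) ⊤ μT :=
  (Lp.memLp ψ).smul (Lp.memLp φ)

/-- The pointwise product of two elements of `L∞`. -/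
def mulL (φ ψ : Linf) : Linf := (memLinf_mul φ ψ).toLp _

end DTTO

namespace DTTO

lemma inner_fourierLp_eq_zero {m n : ℤ} (h : m ≠ n) :
    (inner ℂ (fourierLp 2 m : L2) (fourierLp 2 n : L2) : ℂ) = 0 := by
  have hcoe := congrFun (coe_fourierBasis (T := 2 * Real.pi))
  have h2 := (fourierBasis (T := 2 * Real.pi)).orthonormal.2 (i := m) (j := n) h
  simpa only [hcoe] using h2

lemma span_le_orth_em1 :
    Submodule.span ℂ (Set.range fun n : ℕ => (fourierLp 2 (n : ℤ) : L2))
      ≤ (ℂ ∙ (fourierLp 2 (-1) : L2))ᗮ := by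
  rw [Submodule.span_le]
  rintro x ⟨n, rfl⟩
  rw [SetLike.mem_coe, Submodule.mem_orthogonal]
  intro w hw
  obtain ⟨c, rfl⟩ := Submodule.mem_span_singleton.1 hw
  rw [inner_smul_left, inner_fourierLp_eq_zero (by omega : (-1 : ℤ) ≠ (n : ℤ)), mul_zero]

lemma H2_le_orth_em1 : H2 ≤ (ℂ ∙ (fourierLp 2 (-1) : L2))ᗮ :=
  Submodule.topologicalClosure_minimal _ span_le_orth_em1 (Submodule.isClosed_orthogonal _)

/-- `e₋₁ ∈ H²₋`. -/
lemma em1_mem : (fourierLp 2 (-1) : L2) ∈ Hminus := by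
  unfold Hminus
  rw [Submodule.mem_orthogonal]
  intro v hv
  have h := H2_le_orth_em1 hv
  rw [Submodule.mem_orthogonal] at h
  exact inner_eq_zero_symm.mp (h _ (Submodule.mem_span_singleton_self _))

/-- `e₋₁` as an element of `H²₋`. -/
def em1 : Hminus := ⟨(fourierLp 2 (-1) : L2), em1_mem⟩

/-- For `f ∈ K_u`, the function `u f ∈ uH² ⊆ K_u^⊥`. -/
lemma mul_mem_KuP (u : Linf) (f : Ku u) : Mmul u (f : L2) ∈ KuP u := by
  unfold KuP
  rw [Submodule.mem_orthogonal]
  intro v hv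
  have hv2 : v ∈ (uH2 u)ᗮ := (Submodule.mem_inf.1 hv).2
  have hm : Mmul u (f : L2) ∈ uH2 u :=
    Submodule.mem_map_of_mem (Submodule.mem_inf.1 f.2).1
  rw [Submodule.mem_orthogonal] at hv2
  exact inner_eq_zero_symm.mp (hv2 _ hm)

lemma Ku_le_H2 (u : Linf) : Ku u ≤ H2 := inf_le_left

/-- The inclusion `K_u ⊆ H²` as a continuous linear map. -/
def KuIncl (u : Linf) : Ku u →L[ℂ] H2 :=
  LinearMap.mkContinuous (Submodule.inclusion (Ku_le_H2 u)) 1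
    (fun f => by rw [one_mul]; exact le_of_eq rfl)

end DTTO

namespace DTTO


local notation "⟪" x ", " y "⟫" => @inner ℂ _ _ x y

/-! ### Basic pointwise / integral lemmas -/

lemma coeFn_Mmul (φ : Linf) (f : L2) : ⇑(Mmul φ f) =ᵐ[μT] fun x => φ x * f x :=
  (memL2_smul φ f).coeFn_toLp

lemma coeFn_toL2 (φ : Linf) : ⇑(toL2 φ) =ᵐ[μT] ⇑φ :=
  ((Lp.memLp φ).mono_exponent le_top).coeFn_toLp

lemma inner_L2 (f g : L2) : ⟪f, g⟫ = ∫ x, (starRingEnd ℂ) (f x) * g x ∂μT := by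
  rw [MeasureTheory.L2.inner_def]
  simp only [RCLike.inner_apply]
  exact integral_congr_ae (Filter.Eventually.of_forall fun x => mul_comm _ _)

lemma inner_eq_integral_of_ae {f g : L2} {F G : 𝕋c → ℂ} (hf : ⇑f =ᵐ[μT] F)
    (hg : ⇑g =ᵐ[μT] G) :
    ⟪f, g⟫ = ∫ x, (starRingEnd ℂ) (F x) * G x ∂μT := by
  rw [inner_L2]
  exact integral_congr_ae (by filter_upwards [hf, hg] with x h1 h2; rw [h1, h2])

lemma e1_ae : ⇑(e1 : Linf) =ᵐ[μT] ⇑(fourier (T := 2 * Real.pi) 1) := coeFn_fourierLp ⊤ 1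

lemma eneg1_ae : ⇑(eneg1 : Linf) =ᵐ[μT] ⇑(fourier (T := 2 * Real.pi) (-1)) :=
  coeFn_fourierLp ⊤ (-1)

lemma conj_e1_ae : ∀ᵐ x ∂μT, (starRingEnd ℂ) (e1 x) = eneg1 x := by
  filter_upwards [e1_ae, eneg1_ae] with x h1 h2
  rw [h1, h2, ← fourier_neg]

lemma conj_eneg1_ae : ∀ᵐ x ∂μT, (starRingEnd ℂ) (eneg1 x) = e1 x := by
  filter_upwards [e1_ae, eneg1_ae] with x h1 h2
  rw [h1, h2]
  have : (1 : ℤ) = -(-1) := by norm_num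
  rw [this, fourier_neg, RingHom.congr_fun rfl, RCLike.conj_conj]

lemma e1_unimod : ∀ᵐ x ∂μT, ‖e1 x‖ = 1 := by
  filter_upwards [e1_ae] with x hx
  rw [hx, fourier_apply]; exact Circle.norm_coe _

lemma eneg1_unimod : ∀ᵐ x ∂μT, ‖eneg1 x‖ = 1 := by
  filter_upwards [eneg1_ae] with x hx
  rw [hx, fourier_apply]; exact Circle.norm_coe _

/-- Adjoint relation for multiplication operators with conjugate symbols. -/
lemma inner_Mmul_left_eq_right {φ ψ : Linf} (h : ∀ᵐ x ∂μT, (starRingEnd ℂ) (φ x) = ψ x)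
    (f g : L2) : ⟪Mmul φ f, g⟫ = ⟪f, Mmul ψ g⟫ := by
  rw [inner_eq_integral_of_ae (coeFn_Mmul φ f) (Filter.EventuallyEq.refl _ _),
    inner_eq_integral_of_ae (Filter.EventuallyEq.refl _ _) (coeFn_Mmul ψ g)]
  refine integral_congr_ae ?_
  filter_upwards [h] with x hx
  rw [map_mul, ← hx]; ring

lemma inner_Mmul_e1 (f g : L2) : ⟪Mmul e1 f, g⟫ = ⟪f, Mmul eneg1 g⟫ :=
  inner_Mmul_left_eq_right conj_e1_ae f g

lemma inner_Mmul_eneg1 (f g : L2) : ⟪Mmul eneg1 f, g⟫ = ⟪f, Mmul e1 g⟫ :=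
  inner_Mmul_left_eq_right conj_eneg1_ae f g

/-- Multiplication by a unimodular symbol preserves inner products. -/
lemma inner_Mmul_Mmul {φ : Linf} (h : ∀ᵐ x ∂μT, ‖φ x‖ = 1) (f g : L2) :
    ⟪Mmul φ f, Mmul φ g⟫ = ⟪f, g⟫ := by
  rw [inner_eq_integral_of_ae (coeFn_Mmul φ f) (coeFn_Mmul φ g), inner_L2]
  refine integral_congr_ae ?_
  filter_upwards [h] with x hx
  have h2 : (starRingEnd ℂ) (φ x) * φ x = 1 := by
    rw [mul_comm, Complex.mul_conj, Complex.normSq_eq_norm_sq, hx]; norm_num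
  calc (starRingEnd ℂ) (φ x * f x) * (φ x * g x)
      = ((starRingEnd ℂ) (φ x) * φ x) * ((starRingEnd ℂ) (f x) * g x) := by
        rw [map_mul]; ring
    _ = (starRingEnd ℂ) (f x) * g x := by rw [h2, one_mul]

lemma norm_Mmul_unimod {φ : Linf} (h : ∀ᵐ x ∂μT, ‖φ x‖ = 1) (f : L2) :
    ‖Mmul φ f‖ = ‖f‖ := by
  rw [@norm_eq_sqrt_re_inner ℂ, @norm_eq_sqrt_re_inner ℂ, inner_Mmul_Mmul h]

/-! ### Algebraic identities between multiplication operators -/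

lemma Mmul_eL (m n : ℤ) :
    Mmul (fourierLp ⊤ m) (fourierLp 2 n) = (fourierLp 2 (m + n) : L2) := by
  refine Lp.ext ?_
  filter_upwards [coeFn_Mmul (fourierLp ⊤ m) (fourierLp 2 n), coeFn_fourierLp ⊤ m,
    coeFn_fourierLp 2 n, coeFn_fourierLp 2 (m + n)] with x h1 h2 h3 h4
  rw [h1, h2, h3, h4, fourier_add]

lemma Mmul_oneL (φ : Linf) : Mmul φ (fourierLp 2 0) = toL2 φ := by
  refine Lp.ext ?_
  filter_upwards [coeFn_Mmul φ (fourierLp 2 0), coeFn_fourierLp 2 0, coeFn_toL2 φ]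
    with x h1 h2 h3
  rw [h1, h2, h3, fourier_zero, mul_one]

lemma Mmul_comm (φ ψ : Linf) (f : L2) : Mmul φ (Mmul ψ f) = Mmul ψ (Mmul φ f) := by
  refine Lp.ext ?_
  filter_upwards [coeFn_Mmul φ (Mmul ψ f), coeFn_Mmul ψ f, coeFn_Mmul ψ (Mmul φ f),
    coeFn_Mmul φ f] with x h1 h2 h3 h4
  rw [h1, h2, h3, h4]; ring

lemma Mmul_eLneg1 (φ : Linf) : Mmul φ (fourierLp 2 (-1)) = Mmul eneg1 (toL2 φ) := by
  refine Lp.ext ?_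
  filter_upwards [coeFn_Mmul φ (fourierLp 2 (-1)), coeFn_fourierLp 2 (-1),
    coeFn_Mmul eneg1 (toL2 φ), eneg1_ae, coeFn_toL2 φ] with x h1 h2 h3 h4 h5
  rw [h1, h2, h3, h4, h5]; ring

/-! ### Orthonormality -/

lemma inner_eL_self (n : ℤ) : ⟪(fourierLp 2 n : L2), (fourierLp 2 n : L2)⟫ = 1 := by
  have hcoe := congrFun (coe_fourierBasis (T := 2 * Real.pi))
  have h2 := (fourierBasis (T := 2 * Real.pi)).orthonormal.1 n
  simp only [hcoe] at h2
  rw [@inner_self_eq_norm_sq_to_K ℂ, h2]; norm_num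

lemma inner_eL_coeff (i : ℤ) (f : L2) : ⟪(fourierLp 2 i : L2), f⟫ = fourierCoeff (⇑f) i := by
  rw [inner_eq_integral_of_ae (coeFn_fourierLp 2 i) (Filter.EventuallyEq.refl _ _), fourierCoeff]
  refine integral_congr_ae (Filter.Eventually.of_forall fun x => ?_)
  show (starRingEnd ℂ) (fourier i x) * f x = fourier (-i) x • f x
  rw [fourier_neg, smul_eq_mul]

/-! ### The H² membership criterion -/

lemma H2_ker {T : L2 →L[ℂ] ℂ} (h : ∀ n : ℕ, T (fourierLp 2 (n : ℤ)) = 0) {f : L2}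
    (hf : f ∈ H2) : T f = 0 := by
  have hle : H2 ≤ LinearMap.ker (T : L2 →ₗ[ℂ] ℂ) := by
    apply Submodule.topologicalClosure_minimal
    · rw [Submodule.span_le]; rintro x ⟨n, rfl⟩; exact h n
    · exact ContinuousLinearMap.isClosed_ker T
  exact hle hf

lemma inner_eL_eq_zero_of_H2 {f : L2} (hf : f ∈ H2) {n : ℤ} (hn : n < 0) :
    ⟪(fourierLp 2 n : L2), f⟫ = 0 := by
  have := H2_ker (T := innerSL ℂ (fourierLp 2 n : L2)) (fun m => by
    simpa using inner_fourierLp_eq_zero (m := n) (n := (m : ℤ)) (by omega)) hf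
  simpa using this

lemma mem_H2_of {f : L2} (h : ∀ n : ℤ, n < 0 → ⟪(fourierLp 2 n : L2), f⟫ = 0) :
    f ∈ H2 := by
  have hb := hasSum_fourier_series_L2 f
  have : f ∈ closure ((Submodule.span ℂ
      (Set.range fun n : ℕ => (fourierLp 2 (n : ℤ) : L2))) : Set L2) := by
    refine mem_closure_of_tendsto hb (Filter.Eventually.of_forall fun s => ?_)
    rw [SetLike.mem_coe]
    refine Submodule.sum_mem _ fun i _ => ?_
    by_cases hi : i < 0
    · have hz : fourierCoeff (⇑f) i = 0 := by
        rw [← inner_eL_coeff]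
        exact h i hi
      rw [hz, zero_smul]; exact Submodule.zero_mem _
    · refine Submodule.smul_mem _ _ (Submodule.subset_span ⟨i.toNat, ?_⟩)
      simp only [Int.toNat_of_nonneg (by omega : (0:ℤ) ≤ i)]
  rw [H2, ← SetLike.mem_coe, Submodule.topologicalClosure_coe]
  exact this

lemma oneL_mem_H2 : (fourierLp 2 0 : L2) ∈ H2 :=
  Submodule.le_topologicalClosure _ (Submodule.subset_span ⟨0, by norm_num⟩)

lemma toL2_e1 : toL2 e1 = (fourierLp 2 1 : L2) := by
  refine Lp.ext ?_
  filter_upwards [coeFn_toL2 e1, e1_ae, coeFn_fourierLp 2 1] with x h1 h2 h3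
  rw [h1, h2, h3]

lemma memHinf_e1 : MemHinf e1 := by
  rw [MemHinf, toL2_e1]
  exact Submodule.le_topologicalClosure _ (Submodule.subset_span ⟨1, by norm_num⟩)

/-! ### Multiplication by H∞ functions preserves H² -/

lemma inner_eL_Mmul_eL (n m : ℤ) (φ : Linf) :
    ⟪(fourierLp 2 n : L2), Mmul φ (fourierLp 2 m)⟫
      = ⟪(fourierLp 2 (n - m) : L2), toL2 φ⟫ := by
  have hm : ⇑(Mmul φ (fourierLp 2 m)) =ᵐ[μT]
      fun x => φ x * fourier (T := 2 * Real.pi) m x := by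
    filter_upwards [coeFn_Mmul φ (fourierLp 2 m), coeFn_fourierLp 2 m] with x h1 h2
    rw [h1, h2]
  rw [inner_eq_integral_of_ae (coeFn_fourierLp 2 n) hm,
    inner_eq_integral_of_ae (coeFn_fourierLp 2 (n - m)) (coeFn_toL2 φ)]
  refine integral_congr_ae (Filter.Eventually.of_forall fun x => ?_)
  have key : (starRingEnd ℂ) (fourier (T := 2 * Real.pi) n x)
      * fourier (T := 2 * Real.pi) m x
      = (starRingEnd ℂ) (fourier (T := 2 * Real.pi) (n - m) x) := by
    rw [← fourier_neg, ← fourier_neg, ← fourier_add]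
    congr 1; ring
  calc (starRingEnd ℂ) (fourier (T := 2 * Real.pi) n x)
        * (φ x * fourier (T := 2 * Real.pi) m x)
      = ((starRingEnd ℂ) (fourier (T := 2 * Real.pi) n x)
          * fourier (T := 2 * Real.pi) m x) * φ x := by ring
    _ = (starRingEnd ℂ) (fourier (T := 2 * Real.pi) (n - m) x) * φ x := by rw [key]

lemma Mmul_mem_H2 {φ : Linf} (hφ : MemHinf φ) {f : L2} (hf : f ∈ H2) :
    Mmul φ f ∈ H2 := by
  refine mem_H2_of fun n hn => ?_
  have := H2_ker (T := (innerSL ℂ (fourierLp 2 n : L2)).comp (Mmul φ)) (fun m => by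
    have h1 : ((innerSL ℂ (fourierLp 2 n : L2)).comp (Mmul φ)) (fourierLp 2 (m : ℤ))
        = ⟪(fourierLp 2 (n - m) : L2), toL2 φ⟫ := by
      simp only [ContinuousLinearMap.comp_apply, innerSL_apply_apply]
      exact inner_eL_Mmul_eL n m φ
    rw [h1]
    exact inner_eL_eq_zero_of_H2 hφ (by omega)) hf
  simpa using this

lemma inner_one_Mmul {φ : Linf} (hφ : MemHinf φ) {f : L2} (hf : f ∈ H2) :
    ⟪(fourierLp 2 0 : L2), Mmul φ f⟫
      = ⟪(fourierLp 2 0 : L2), toL2 φ⟫ * ⟪(fourierLp 2 0 : L2), f⟫ := by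
  set c : ℂ := ⟪(fourierLp 2 0 : L2), toL2 φ⟫ with hc
  have := H2_ker
      (T := (innerSL ℂ (fourierLp 2 0 : L2)).comp (Mmul φ)
        - c • innerSL ℂ (fourierLp 2 0 : L2))
      (fun m => by
        simp only [ContinuousLinearMap.sub_apply, ContinuousLinearMap.comp_apply,
          ContinuousLinearMap.smul_apply, innerSL_apply_apply]
        rw [inner_eL_Mmul_eL 0 m φ]
        rcases Nat.eq_zero_or_pos m with hm | hm
        · subst hm
          simp only [Nat.cast_zero, zero_sub, neg_zero, sub_zero]
          rw [inner_eL_self 0, ← hc, smul_eq_mul, mul_one, sub_self]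
        · rw [inner_eL_eq_zero_of_H2 hφ (by omega),
            inner_fourierLp_eq_zero (by omega : (0 : ℤ) ≠ (m : ℤ)), smul_zero, sub_zero])
      hf
  simp only [ContinuousLinearMap.sub_apply, ContinuousLinearMap.comp_apply,
    ContinuousLinearMap.smul_apply, innerSL_apply_apply, sub_eq_zero, smul_eq_mul] at this
  exact this


/-! ### The kernel functions -/

/-- The reproducing kernel at `0`: `k₀ = 1 - conj (u 0) • u`. -/
def k0v (u : Linf) : L2 := (fourierLp 2 0 : L2) - (starRingEnd ℂ) (coef0 u) • toL2 u

/-- `u - u 0`. -/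
def wv (u : Linf) : L2 := toL2 u - coef0 u • (fourierLp 2 0 : L2)

/-- The conjugate kernel at `0`: `k̃₀ = conj(z) (u - u 0)`. -/
def kt0v (u : Linf) : L2 := Mmul eneg1 (wv u)

lemma inner_one_toL2 (u : Linf) : ⟪(fourierLp 2 0 : L2), toL2 u⟫ = coef0 u := by
  rw [inner_eL_coeff, coef0]
  unfold fourierCoeff
  exact integral_congr_ae (by filter_upwards [coeFn_toL2 u] with x hx; rw [hx])

variable {u : Linf}

lemma inner_U_U (hu : IsInnerFn u) : ⟪toL2 u, toL2 u⟫ = 1 := by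
  rw [← Mmul_oneL u, inner_Mmul_Mmul hu.unimod, inner_eL_self]

lemma inner_uh_eq_zero {f : L2} (hf : f ∈ Ku u) {h : L2} (hh : h ∈ H2) :
    ⟪Mmul u h, f⟫ = 0 := by
  have hperp : f ∈ (uH2 u)ᗮ := (Submodule.mem_inf.1 hf).2
  exact (Submodule.mem_orthogonal _ f).1 hperp _ (Submodule.mem_map_of_mem hh)

lemma inner_uh_U (hu : IsInnerFn u) (h : L2) :
    ⟪Mmul u h, toL2 u⟫ = ⟪h, (fourierLp 2 0 : L2)⟫ := by
  rw [← Mmul_oneL u, inner_Mmul_Mmul hu.unimod]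

lemma inner_uh_one (hu : IsInnerFn u) {h : L2} (hh : h ∈ H2) :
    ⟪Mmul u h, (fourierLp 2 0 : L2)⟫
      = (starRingEnd ℂ) (coef0 u * ⟪(fourierLp 2 0 : L2), h⟫) := by
  rw [← inner_conj_symm, inner_one_Mmul hu.memH2 hh, inner_one_toL2]

lemma inner_one_zh {h : L2} (hh : h ∈ H2) :
    ⟪(fourierLp 2 0 : L2), Mmul e1 h⟫ = 0 := by
  rw [inner_one_Mmul memHinf_e1 hh, toL2_e1,
    inner_fourierLp_eq_zero (by norm_num : (0 : ℤ) ≠ 1), zero_mul]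

lemma k0v_mem (hu : IsInnerFn u) : k0v u ∈ Ku u := by
  refine Submodule.mem_inf.2 ⟨?_, ?_⟩
  · exact Submodule.sub_mem _ oneL_mem_H2 (Submodule.smul_mem _ _ hu.memH2)
  · rw [Submodule.mem_orthogonal]
    rintro y ⟨h, hh, rfl⟩
    show ⟪Mmul u h, k0v u⟫ = 0
    rw [k0v, inner_sub_right, inner_smul_right, inner_uh_one hu hh, inner_uh_U hu,
      ← inner_conj_symm h (fourierLp 2 0 : L2), map_mul]
    ring

lemma Mmul_eneg1_oneL : Mmul eneg1 (fourierLp 2 0 : L2) = (fourierLp 2 (-1) : L2) := by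
  have := Mmul_eL (-1) 0
  rw [show (-1 : ℤ) + 0 = -1 by norm_num] at this
  exact this

lemma Mmul_e1_eL (n : ℤ) : Mmul e1 (fourierLp 2 n : L2) = (fourierLp 2 (1 + n) : L2) :=
  Mmul_eL 1 n

lemma Mmul_eneg1_sub_mem_H2 {h : L2} (hh : h ∈ H2) :
    Mmul eneg1 (h - ⟪(fourierLp 2 0 : L2), h⟫ • (fourierLp 2 0 : L2)) ∈ H2 := by
  refine mem_H2_of fun n hn => ?_
  rw [← inner_Mmul_e1, Mmul_e1_eL, inner_sub_right, inner_smul_right]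
  rcases eq_or_lt_of_le (show n ≤ -1 by omega) with hn1 | hn1
  · subst hn1
    rw [show (1 : ℤ) + -1 = 0 by norm_num, inner_eL_self, mul_one, sub_self]
  · rw [inner_eL_eq_zero_of_H2 hh (by omega),
      inner_fourierLp_eq_zero (by omega : (1 + n : ℤ) ≠ 0), mul_zero, sub_zero]

lemma kt0v_eq : kt0v u
    = Mmul eneg1 (toL2 u - ⟪(fourierLp 2 0 : L2), toL2 u⟫ • (fourierLp 2 0 : L2)) := by
  rw [kt0v, wv, inner_one_toL2]

lemma kt0v_mem_H2 (hu : IsInnerFn u) : kt0v u ∈ H2 := by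
  rw [kt0v_eq]
  exact Mmul_eneg1_sub_mem_H2 hu.memH2

lemma Mmul_eneg1_U (u : Linf) :
    Mmul eneg1 (toL2 u) = kt0v u + coef0 u • (fourierLp 2 (-1) : L2) := by
  rw [kt0v, wv, map_sub, _root_.map_smul, Mmul_eneg1_oneL, sub_add_cancel]

/-- The key identity `⟪u, z f⟫ = ⟪k̃₀, f⟫` for `f ∈ H²`. -/
lemma inner_U_zf {f : L2} (hf : f ∈ H2) :
    ⟪toL2 u, Mmul e1 f⟫ = ⟪kt0v u, f⟫ := by
  rw [← inner_conj_symm, inner_Mmul_e1, inner_conj_symm, Mmul_eneg1_U, inner_add_left,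
    inner_smul_left, inner_eL_eq_zero_of_H2 hf (by norm_num : (-1 : ℤ) < 0), mul_zero, add_zero]

/-- For `f ∈ K_u` and `h ∈ H²`, `⟪u h, z f⟫ = conj ⟪1, h⟫ * ⟪k̃₀, f⟫`. -/
lemma inner_uh_zf (hu : IsInnerFn u) {h f : L2} (hh : h ∈ H2) (hf : f ∈ Ku u) :
    ⟪Mmul u h, Mmul e1 f⟫
      = (starRingEnd ℂ) ⟪(fourierLp 2 0 : L2), h⟫ * ⟪kt0v u, f⟫ := by
  have hfH : f ∈ H2 := (Submodule.mem_inf.1 hf).1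
  set c0 : ℂ := ⟪(fourierLp 2 0 : L2), h⟫ with hc0
  have hdec : Mmul eneg1 h
      = Mmul eneg1 (h - c0 • (fourierLp 2 0 : L2)) + c0 • (fourierLp 2 (-1) : L2) := by
    rw [map_sub, _root_.map_smul, Mmul_eneg1_oneL, sub_add_cancel]
  rw [← inner_Mmul_eneg1, Mmul_comm, hdec, map_add, _root_.map_smul, inner_add_left,
    inner_smul_left]
  have h1 : ⟪Mmul u (Mmul eneg1 (h - c0 • (fourierLp 2 0 : L2))), f⟫ = 0 :=
    inner_uh_eq_zero hf (Mmul_eneg1_sub_mem_H2 hh)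
  have h2 : ⟪Mmul u (fourierLp 2 (-1) : L2), f⟫ = ⟪kt0v u, f⟫ := by
    rw [Mmul_eLneg1, Mmul_eneg1_U, inner_add_left, inner_smul_left,
      inner_eL_eq_zero_of_H2 hfH (by norm_num : (-1 : ℤ) < 0), mul_zero, add_zero]
  rw [h1, h2, zero_add]

lemma U_mem_KuP_orth (hu : IsInnerFn u) {f : L2} (hf : f ∈ Ku u) :
    ⟪toL2 u, f⟫ = 0 := by
  rw [← Mmul_oneL u]
  exact inner_uh_eq_zero hf oneL_mem_H2

lemma inner_k0v (hu : IsInnerFn u) {f : L2} (hf : f ∈ Ku u) :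
    ⟪k0v u, f⟫ = ⟪(fourierLp 2 0 : L2), f⟫ := by
  rw [k0v, inner_sub_left, inner_smul_left, RCLike.conj_conj, U_mem_KuP_orth hu hf,
    mul_zero, sub_zero]

/-! ### Norm computations -/

lemma norm_sq_of_inner {x : L2} {r : ℝ} (h : ⟪x, x⟫ = (r : ℂ)) : ‖x‖ ^ 2 = r := by
  have h2 := @inner_self_eq_norm_sq_to_K ℂ _ _ _ _ x
  rw [h] at h2
  exact Complex.ofReal_injective (by push_cast; exact h2.symm)

lemma mul_conj_abs_sq (c : ℂ) :
    c * (starRingEnd ℂ) c = ((‖c‖ : ℝ) : ℂ) ^ 2 := by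
  rw [Complex.mul_conj, Complex.normSq_eq_norm_sq]
  push_cast
  ring

lemma inner_w_w (hu : IsInnerFn u) :
    ⟪wv u, wv u⟫ = ((1 - ‖coef0 u‖ ^ 2 : ℝ) : ℂ) := by
  have h1 : ⟪(fourierLp 2 0 : L2), toL2 u⟫ = coef0 u := inner_one_toL2 u
  have h2 : ⟪toL2 u, (fourierLp 2 0 : L2)⟫ = (starRingEnd ℂ) (coef0 u) := by
    rw [← inner_conj_symm (toL2 u) (fourierLp 2 0 : L2), h1]
  simp only [wv, inner_sub_sub_self, inner_smul_left, inner_smul_right, inner_U_U hu,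
    h1, h2, inner_eL_self]
  push_cast
  linear_combination -(mul_conj_abs_sq (coef0 u))

lemma norm_kt0v_sq (hu : IsInnerFn u) :
    ‖kt0v u‖ ^ 2 = 1 - ‖coef0 u‖ ^ 2 :=
  norm_sq_of_inner (by rw [kt0v, inner_Mmul_Mmul eneg1_unimod, inner_w_w hu])

lemma norm_k0v_sq (hu : IsInnerFn u) :
    ‖k0v u‖ ^ 2 = 1 - ‖coef0 u‖ ^ 2 := by
  refine norm_sq_of_inner ?_
  have h1 : ⟪(fourierLp 2 0 : L2), toL2 u⟫ = coef0 u := inner_one_toL2 u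
  have h2 : ⟪toL2 u, (fourierLp 2 0 : L2)⟫ = (starRingEnd ℂ) (coef0 u) := by
    rw [← inner_conj_symm (toL2 u) (fourierLp 2 0 : L2), h1]
  simp only [k0v, inner_sub_sub_self, inner_smul_left, inner_smul_right, inner_U_U hu,
    h1, h2, inner_eL_self, RCLike.conj_conj]
  push_cast
  linear_combination -(mul_conj_abs_sq (coef0 u))

lemma abs_coef0_lt_one (hu : IsInnerFn u) (hnc : Nonconst u) :
    ‖coef0 u‖ < 1 := by
  have hk := norm_k0v_sq hu
  have hle : ‖coef0 u‖ ≤ 1 := by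
    nlinarith [sq_nonneg (‖k0v u‖), norm_nonneg (coef0 u)]
  rcases lt_or_eq_of_le hle with h | h
  · exact h
  · exfalso
    have hka : ‖k0v u‖ = 0 := by nlinarith
    have hk0 : k0v u = 0 := norm_eq_zero.1 hka
    have ha0 : coef0 u ≠ 0 := by
      intro h0
      rw [h0] at h
      simp at h
    refine hnc ⟨((starRingEnd ℂ) (coef0 u))⁻¹, ?_⟩
    have hae : ⇑(k0v u) =ᵐ[μT] (0 : 𝕋c → ℂ) := by
      rw [hk0]
      exact Lp.coeFn_zero ℂ 2 μT
    have hsub : ⇑(k0v u) =ᵐ[μT]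
        fun x => fourier (T := 2 * Real.pi) 0 x - (starRingEnd ℂ) (coef0 u) * u x := by
      rw [k0v]
      filter_upwards [Lp.coeFn_sub (fourierLp 2 0 : L2) ((starRingEnd ℂ) (coef0 u) • toL2 u),
        Lp.coeFn_smul ((starRingEnd ℂ) (coef0 u)) (toL2 u), coeFn_fourierLp 2 0,
        coeFn_toL2 u] with x h1 h2 h3 h4
      rw [h1]
      simp only [Pi.sub_apply, h3, h2, Pi.smul_apply, smul_eq_mul, h4]
    filter_upwards [hae, hsub] with x h1 h2
    have h3 : fourier (T := 2 * Real.pi) 0 x - (starRingEnd ℂ) (coef0 u) * u x = 0 := by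
      rw [← h2]
      exact h1
    rw [fourier_zero] at h3
    have h4 : (starRingEnd ℂ) (coef0 u) * u x = 1 := by linear_combination -h3
    exact eq_inv_of_mul_eq_one_right h4

/-! ### The action of the compressed shift -/

lemma Aop_e1_apply (hu : IsInnerFn u) (f : Ku u) :
    ((Aop u e1 f : Ku u) : L2) = Mmul e1 (f : L2) - ⟪kt0v u, (f : L2)⟫ • toL2 u := by
  have hfK : (f : L2) ∈ Ku u := f.2
  have hfH : (f : L2) ∈ H2 := (Submodule.mem_inf.1 hfK).1
  set c : ℂ := ⟪kt0v u, (f : L2)⟫ with hc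
  show (Ku u).starProjection (Mmul e1 (f : L2)) = _
  refine Submodule.eq_starProjection_of_mem_of_inner_eq_zero ?_ ?_
  · refine Submodule.mem_inf.2 ⟨?_, ?_⟩
    · exact Submodule.sub_mem _ (Mmul_mem_H2 memHinf_e1 hfH)
        (Submodule.smul_mem _ _ hu.memH2)
    · rw [Submodule.mem_orthogonal]
      rintro y ⟨h, hh, rfl⟩
      show ⟪Mmul u h, Mmul e1 (f : L2) - c • toL2 u⟫ = 0
      rw [inner_sub_right, inner_smul_right, inner_uh_zf hu hh hfK, inner_uh_U hu,
        ← inner_conj_symm h (fourierLp 2 0 : L2), ← hc]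
      ring
  · intro w hw
    rw [sub_sub_cancel, inner_smul_left, U_mem_KuP_orth hu hw, mul_zero]

lemma normA_sq (hu : IsInnerFn u) (f : Ku u) :
    ‖Aop u e1 f‖ ^ 2 = ‖f‖ ^ 2 - ‖⟪kt0v u, (f : L2)⟫‖ ^ 2 := by
  have hfH : (f : L2) ∈ H2 := (Submodule.mem_inf.1 f.2).1
  set c : ℂ := ⟪kt0v u, (f : L2)⟫ with hc
  have hcoe : ‖Aop u e1 f‖ = ‖((Aop u e1 f : Ku u) : L2)‖ := rfl
  rw [hcoe, Aop_e1_apply hu f]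
  refine norm_sq_of_inner ?_
  have hzz : ⟪Mmul e1 (f : L2), Mmul e1 (f : L2)⟫ = ((‖f‖ : ℂ)) ^ 2 := by
    rw [inner_Mmul_Mmul e1_unimod, @inner_self_eq_norm_sq_to_K ℂ]
    norm_cast
  have hUz : ⟪toL2 u, Mmul e1 (f : L2)⟫ = c := inner_U_zf hfH
  have hzU : ⟪Mmul e1 (f : L2), toL2 u⟫ = (starRingEnd ℂ) c := by
    rw [← inner_conj_symm, hUz]
  rw [inner_sub_sub_self, hzz, inner_smul_right, inner_smul_left, inner_smul_left,
    inner_smul_right, hUz, hzU, inner_U_U hu]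
  push_cast
  linear_combination -(mul_conj_abs_sq c)

/-! ### The action of the adjoint -/

lemma Aop_eneg1_apply (hu : IsInnerFn u) (f : Ku u) :
    ((Aop u eneg1 f : Ku u) : L2)
      = Mmul eneg1 ((f : L2) - ⟪(fourierLp 2 0 : L2), (f : L2)⟫ • (fourierLp 2 0 : L2)) := by
  have hfK : (f : L2) ∈ Ku u := f.2
  have hfH : (f : L2) ∈ H2 := (Submodule.mem_inf.1 hfK).1
  set d : ℂ := ⟪(fourierLp 2 0 : L2), (f : L2)⟫ with hd
  show (Ku u).starProjection (Mmul eneg1 (f : L2)) = _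
  refine Submodule.eq_starProjection_of_mem_of_inner_eq_zero ?_ ?_
  · refine Submodule.mem_inf.2 ⟨Mmul_eneg1_sub_mem_H2 hfH, ?_⟩
    rw [Submodule.mem_orthogonal]
    rintro y ⟨h, hh, rfl⟩
    show ⟪Mmul u h, Mmul eneg1 ((f : L2) - d • (fourierLp 2 0 : L2))⟫ = 0
    rw [← inner_Mmul_e1, Mmul_comm, inner_sub_right, inner_smul_right]
    have h1 : ⟪Mmul u (Mmul e1 h), (f : L2)⟫ = 0 :=
      inner_uh_eq_zero hfK (Mmul_mem_H2 memHinf_e1 hh)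
    have h2 : ⟪Mmul u (Mmul e1 h), (fourierLp 2 0 : L2)⟫ = 0 := by
      rw [inner_uh_one hu (Mmul_mem_H2 memHinf_e1 hh), inner_one_zh hh, mul_zero, map_zero]
    rw [h1, h2, mul_zero, sub_zero]
  · intro w hw
    have hsub : Mmul eneg1 (f : L2)
        - Mmul eneg1 ((f : L2) - d • (fourierLp 2 0 : L2))
        = d • (fourierLp 2 (-1) : L2) := by
      rw [map_sub, _root_.map_smul, Mmul_eneg1_oneL, sub_sub_cancel]
    rw [hsub, inner_smul_left]
    have hwH : w ∈ H2 := (Submodule.mem_inf.1 hw).1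
    rw [inner_eL_eq_zero_of_H2 hwH (by norm_num : (-1 : ℤ) < 0), mul_zero]

lemma normAadj_sq (hu : IsInnerFn u) (f : Ku u) :
    ‖Aop u eneg1 f‖ ^ 2 = ‖f‖ ^ 2 - ‖⟪k0v u, (f : L2)⟫‖ ^ 2 := by
  have hfK : (f : L2) ∈ Ku u := f.2
  set d : ℂ := ⟪(fourierLp 2 0 : L2), (f : L2)⟫ with hd
  have hk : ⟪k0v u, (f : L2)⟫ = d := inner_k0v hu hfK
  have hcoe : ‖Aop u eneg1 f‖ = ‖((Aop u eneg1 f : Ku u) : L2)‖ := rfl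
  rw [hcoe, Aop_eneg1_apply hu f, hk]
  refine norm_sq_of_inner ?_
  have hff : ⟪(f : L2), (f : L2)⟫ = ((‖f‖ : ℝ) : ℂ) ^ 2 := by
    rw [@inner_self_eq_norm_sq_to_K ℂ]
    norm_cast
  rw [inner_Mmul_Mmul eneg1_unimod, inner_sub_sub_self, inner_smul_right, inner_smul_left,
    inner_smul_left, inner_smul_right, inner_eL_self, hff,
    ← inner_conj_symm (f : L2) (fourierLp 2 0 : L2), ← hd]
  push_cast
  linear_combination -(mul_conj_abs_sq d)

/-- The adjoint of the compressed shift is the truncated Toeplitz operator with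
symbol `conj z`. -/
lemma adjoint_Aop_e1 (u : Linf) :
    ContinuousLinearMap.adjoint (Aop u e1) = Aop u eneg1 := by
  symm
  rw [ContinuousLinearMap.eq_adjoint_iff]
  intro x y
  show (inner ℂ (Aop u eneg1 x) y : ℂ) = inner ℂ x (Aop u e1 y)
  have h1 : (inner ℂ (Aop u eneg1 x) y : ℂ) = ⟪Mmul eneg1 (x : L2), (y : L2)⟫ := by
    show (inner ℂ (Submodule.orthogonalProjectionOnto (Ku u) (Mmul eneg1 (x : L2))) y : ℂ) = _
    rw [Submodule.inner_orthogonalProjectionOnto_eq_of_mem_right]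
  have h2 : (inner ℂ x (Aop u e1 y) : ℂ) = ⟪(x : L2), Mmul e1 (y : L2)⟫ := by
    show (inner ℂ x (Submodule.orthogonalProjectionOnto (Ku u) (Mmul e1 (y : L2))) : ℂ) = _
    rw [Submodule.inner_orthogonalProjectionOnto_eq_of_mem_left]
  rw [h1, h2, inner_Mmul_eneg1]


lemma kt0v_mem (hu : IsInnerFn u) : kt0v u ∈ Ku u := by
  refine Submodule.mem_inf.2 ⟨kt0v_mem_H2 hu, ?_⟩
  rw [Submodule.mem_orthogonal]
  rintro y ⟨h, hh, rfl⟩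
  show ⟪Mmul u h, kt0v u⟫ = 0
  have hzh : Mmul e1 h ∈ H2 := Mmul_mem_H2 memHinf_e1 hh
  have key : ⟪wv u, Mmul u (Mmul e1 h)⟫ = 0 := by
    rw [wv, inner_sub_left, inner_smul_left]
    have h1 : ⟪toL2 u, Mmul u (Mmul e1 h)⟫ = 0 := by
      rw [← inner_conj_symm (toL2 u) (Mmul u (Mmul e1 h)), inner_uh_U hu,
        ← inner_conj_symm (Mmul e1 h) (fourierLp 2 0 : L2), RCLike.conj_conj,
        inner_one_zh hh]
    have h2 : ⟪(fourierLp 2 0 : L2), Mmul u (Mmul e1 h)⟫ = 0 := by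
      rw [inner_one_Mmul hu.memH2 hzh, inner_one_zh hh, mul_zero]
    rw [h1, h2, mul_zero, sub_zero]
  rw [kt0v, ← inner_conj_symm (Mmul u h) (Mmul eneg1 (wv u)), inner_Mmul_eneg1,
    Mmul_comm, key, map_zero]

lemma le_of_sq_le_sq {x y : ℝ} (hx : 0 ≤ x) (hy : 0 ≤ y) (h : x ^ 2 ≤ y ^ 2) : x ≤ y := by
  have h2 := Real.sqrt_le_sqrt h
  rwa [Real.sqrt_sq hx, Real.sqrt_sq hy] at h2

lemma eq_of_sq_eq_sq {x y : ℝ} (hx : 0 ≤ x) (hy : 0 ≤ y) (h : x ^ 2 = y ^ 2) : x = y := by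
  have h2 := congrArg Real.sqrt h
  rwa [Real.sqrt_sq hx, Real.sqrt_sq hy] at h2

set_option maxHeartbeats 1000000 in
/-- `m(S_u) = |u(0)| = m(S_u*)` for the compressed shift `S_u = A_{e₁}` on
the model space `K_u`, and both `S_u`, `S_u*` attain their minimum modulus. -/
theorem minMod_compressed_shift (u : Linf) (hu : IsInnerFn u) (hnc : Nonconst u) :
    minMod (Aop u e1) = ‖coef0 u‖
    ∧ minMod (ContinuousLinearMap.adjoint (Aop u e1)) = ‖coef0 u‖
    ∧ (∃ f : Ku u, ‖f‖ = 1 ∧ ‖Aop u e1 f‖ = minMod (Aop u e1))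
    ∧ (∃ f : Ku u, ‖f‖ = 1 ∧
        ‖ContinuousLinearMap.adjoint (Aop u e1) f‖
          = minMod (ContinuousLinearMap.adjoint (Aop u e1))) := by
  set a : ℝ := ‖coef0 u‖ with ha
  have halt : a < 1 := abs_coef0_lt_one hu hnc
  have ha0 : (0 : ℝ) ≤ a := norm_nonneg _
  have hkt : ‖kt0v u‖ ^ 2 = 1 - a ^ 2 := norm_kt0v_sq hu
  have hk0 : ‖k0v u‖ ^ 2 = 1 - a ^ 2 := norm_k0v_sq hu
  have hktpos : 0 < ‖kt0v u‖ := by nlinarith [norm_nonneg (kt0v u)]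
  have hk0pos : 0 < ‖k0v u‖ := by nlinarith [norm_nonneg (k0v u)]
  -- lower bounds
  have hlowA : ∀ x : Ku u, ‖x‖ = 1 → a ≤ ‖Aop u e1 x‖ := by
    intro x hx
    refine le_of_sq_le_sq ha0 (norm_nonneg _) ?_
    have h1 := normA_sq hu x
    rw [hx, one_pow] at h1
    have h2 : ‖⟪kt0v u, (x : L2)⟫‖ ≤ ‖kt0v u‖ := by
      have h3 := norm_inner_le_norm (𝕜 := ℂ) (kt0v u) (x : L2)
      have h4 : ‖(x : L2)‖ = 1 := hx
      rw [h4, mul_one] at h3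
      exact h3
    have h5 : ‖⟪kt0v u, (x : L2)⟫‖ ^ 2 ≤ ‖kt0v u‖ ^ 2 :=
      pow_le_pow_left₀ (norm_nonneg _) h2 2
    linarith
  have hlowAd : ∀ x : Ku u, ‖x‖ = 1 → a ≤ ‖Aop u eneg1 x‖ := by
    intro x hx
    refine le_of_sq_le_sq ha0 (norm_nonneg _) ?_
    have h1 := normAadj_sq hu x
    rw [hx, one_pow] at h1
    have h2 : ‖⟪k0v u, (x : L2)⟫‖ ≤ ‖k0v u‖ := by
      have h3 := norm_inner_le_norm (𝕜 := ℂ) (k0v u) (x : L2)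
      have h4 : ‖(x : L2)‖ = 1 := hx
      rw [h4, mul_one] at h3
      exact h3
    have h5 : ‖⟪k0v u, (x : L2)⟫‖ ^ 2 ≤ ‖k0v u‖ ^ 2 :=
      pow_le_pow_left₀ (norm_nonneg _) h2 2
    linarith
  -- the extremal vectors
  have hktne : ((‖kt0v u‖ : ℝ) : ℂ) ≠ 0 := by
    exact_mod_cast hktpos.ne'
  have hk0ne : ((‖k0v u‖ : ℝ) : ℂ) ≠ 0 := by
    exact_mod_cast hk0pos.ne'
  set f0 : Ku u := ((‖kt0v u‖ : ℝ) : ℂ)⁻¹ • (⟨kt0v u, kt0v_mem hu⟩ : Ku u) with hf0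
  set f1 : Ku u := ((‖k0v u‖ : ℝ) : ℂ)⁻¹ • (⟨k0v u, k0v_mem hu⟩ : Ku u) with hf1
  have hf0c : (f0 : L2) = ((‖kt0v u‖ : ℝ) : ℂ)⁻¹ • kt0v u := rfl
  have hf1c : (f1 : L2) = ((‖k0v u‖ : ℝ) : ℂ)⁻¹ • k0v u := rfl
  have hf0n : ‖f0‖ = 1 := by
    rw [hf0, norm_smul, norm_inv]
    have h1 : ‖((‖kt0v u‖ : ℝ) : ℂ)‖ = ‖kt0v u‖ := by
      rw [Complex.norm_real, Real.norm_eq_abs, abs_of_pos hktpos]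
    have h2 : ‖(⟨kt0v u, kt0v_mem hu⟩ : Ku u)‖ = ‖kt0v u‖ := rfl
    rw [h1, h2, inv_mul_cancel₀ hktpos.ne']
  have hf1n : ‖f1‖ = 1 := by
    rw [hf1, norm_smul, norm_inv]
    have h1 : ‖((‖k0v u‖ : ℝ) : ℂ)‖ = ‖k0v u‖ := by
      rw [Complex.norm_real, Real.norm_eq_abs, abs_of_pos hk0pos]
    have h2 : ‖(⟨k0v u, k0v_mem hu⟩ : Ku u)‖ = ‖k0v u‖ := rfl
    rw [h1, h2, inv_mul_cancel₀ hk0pos.ne']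
  have hself0 : ⟪kt0v u, kt0v u⟫ = ((‖kt0v u‖ : ℝ) : ℂ) ^ 2 := by
    rw [@inner_self_eq_norm_sq_to_K ℂ]
    norm_cast
  have hself1 : ⟪k0v u, k0v u⟫ = ((‖k0v u‖ : ℝ) : ℂ) ^ 2 := by
    rw [@inner_self_eq_norm_sq_to_K ℂ]
    norm_cast
  have hinner0 : ⟪kt0v u, (f0 : L2)⟫ = ((‖kt0v u‖ : ℝ) : ℂ) := by
    rw [hf0c, inner_smul_right, hself0, pow_two, ← mul_assoc,
      inv_mul_cancel₀ hktne, one_mul]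
  have hinner1 : ⟪k0v u, (f1 : L2)⟫ = ((‖k0v u‖ : ℝ) : ℂ) := by
    rw [hf1c, inner_smul_right, hself1, pow_two, ← mul_assoc,
      inv_mul_cancel₀ hk0ne, one_mul]
  have hAf0 : ‖Aop u e1 f0‖ = a := by
    refine eq_of_sq_eq_sq (norm_nonneg _) ha0 ?_
    have h1 := normA_sq hu f0
    rw [hf0n, one_pow, hinner0] at h1
    rw [h1, Complex.norm_real, Real.norm_eq_abs, abs_of_pos hktpos]
    linarith
  have hAf1 : ‖Aop u eneg1 f1‖ = a := by
    refine eq_of_sq_eq_sq (norm_nonneg _) ha0 ?_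
    have h1 := normAadj_sq hu f1
    rw [hf1n, one_pow, hinner1] at h1
    rw [h1, Complex.norm_real, Real.norm_eq_abs, abs_of_pos hk0pos]
    linarith
  -- infimum computations
  haveI hne : Nonempty {x : Ku u // ‖x‖ = 1} := ⟨⟨f0, hf0n⟩⟩
  have hbddA : BddBelow (Set.range fun x : {x : Ku u // ‖x‖ = 1} => ‖Aop u e1 x.1‖) :=
    ⟨0, by rintro y ⟨x, rfl⟩; exact norm_nonneg _⟩
  have hbddAd : BddBelow (Set.range fun x : {x : Ku u // ‖x‖ = 1} => ‖Aop u eneg1 x.1‖) :=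
    ⟨0, by rintro y ⟨x, rfl⟩; exact norm_nonneg _⟩
  have hminA : minMod (Aop u e1) = a := by
    refine le_antisymm ?_ ?_
    · have h1 := ciInf_le hbddA (⟨f0, hf0n⟩ : {x : Ku u // ‖x‖ = 1})
      rw [hAf0] at h1
      exact h1
    · exact le_ciInf fun x => hlowA x.1 x.2
  have hminAd : minMod (Aop u eneg1) = a := by
    refine le_antisymm ?_ ?_
    · have h1 := ciInf_le hbddAd (⟨f1, hf1n⟩ : {x : Ku u // ‖x‖ = 1})
      rw [hAf1] at h1
      exact h1
    · exact le_ciInf fun x => hlowAd x.1 x.2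
  rw [adjoint_Aop_e1]
  exact ⟨hminA, hminAd, ⟨f0, hf0n, by rw [hAf0, hminA]⟩, ⟨f1, hf1n, by rw [hAf1, hminAd]⟩⟩

end DTTO
end
end

section
/- Let u be a nonconstant inner function and let φ ∈ L∞(𝕋) be such that the dual truncated Toeplitz operator D_φ on K_u^⊥ is a normal operator. Then dist(0, convexHull(ess ran(φ))) ≤ m(D_φ) ≤ ess inf_{ζ ∈ 𝕋} |φ(ζ)|. -/
open MeasureTheory Complex
open scoped InnerProductSpace ENNReal

noncomputable section

namespace DTTO

/-- The essential range of `φ ∈ L∞`. -/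
def essRan (φ : Linf) : Set ℂ :=
  {w : ℂ | ∀ ε > (0 : ℝ), 0 < μT {z : 𝕋c | ‖φ z - w‖ < ε}}

/-- The essential infimum of `|φ|`. -/
def essInfAbs (φ : Linf) : ℝ := essInf (fun z => ‖φ z‖) μT



section Helpers

lemma Mmul_coeFn (φ : Linf) (f : L2) : ⇑(Mmul φ f) =ᵐ[μT] ⇑φ • ⇑f :=
  MemLp.coeFn_toLp (memL2_smul φ f)

lemma norm_Mmul_apply_le (φ : Linf) (f : L2) : ‖Mmul φ f‖ ≤ ‖φ‖ * ‖f‖ :=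
  ((Mmul φ).le_opNorm f).trans (mul_le_mul_of_nonneg_right
    (LinearMap.mkContinuous_norm_le _ (norm_nonneg φ) _) (norm_nonneg f))

lemma Linf_ae_bound (φ : Linf) : ∀ᵐ z ∂μT, ‖φ z‖ ≤ ‖φ‖ := by
  filter_upwards [enorm_ae_le_eLpNormEssSup (⇑φ) μT] with z hz
  have h1 : ‖φ z‖ = ((‖φ z‖₊ : ℝ≥0∞)).toReal := by simp
  rw [h1, Lp.norm_def]
  exact ENNReal.toReal_mono (Lp.eLpNorm_ne_top φ) (by rwa [eLpNorm_exponent_top])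

lemma norm_Mmul_of_unimod {u : Linf} (hu : ∀ᵐ z ∂μT, ‖u z‖ = 1)
    (f : L2) : ‖Mmul u f‖ = ‖f‖ := by
  rw [Lp.norm_def, Lp.norm_def, eLpNorm_congr_ae (Mmul_coeFn u f)]
  congr 1
  apply eLpNorm_congr_norm_ae
  filter_upwards [hu] with z hz
  simp only [Pi.smul_apply, smul_eq_mul, Pi.mul_apply, norm_mul,
    hz, one_mul]

lemma norm_Mmul_Mmul_unimod {u : Linf} (hu : ∀ᵐ z ∂μT, ‖u z‖ = 1)
    (φ : Linf) (f : L2) : ‖Mmul φ (Mmul u f)‖ = ‖Mmul φ f‖ := by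
  rw [Lp.norm_def, Lp.norm_def, eLpNorm_congr_ae (Mmul_coeFn φ (Mmul u f)),
    eLpNorm_congr_ae (Mmul_coeFn φ f)]
  congr 1
  apply eLpNorm_congr_norm_ae
  filter_upwards [hu, Mmul_coeFn u f] with z hz huf
  simp only [Pi.smul_apply, smul_eq_mul, Pi.mul_apply, huf, norm_mul,
    hz, one_mul]

lemma uH2_le_KuP (u : Linf) : uH2 u ≤ KuP u := by
  intro w hw
  rw [KuP, Submodule.mem_orthogonal]
  intro v hv
  have hv2 : v ∈ (uH2 u)ᗮ := (Submodule.mem_inf.1 hv).2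
  rw [Submodule.mem_orthogonal] at hv2
  exact inner_eq_zero_symm.mp (hv2 _ hw)

lemma Hminus_le_KuP (u : Linf) : Hminus ≤ KuP u :=
  Submodule.orthogonal_le (Ku_le_H2 u)

lemma fourierLp_mem_H2 {j : ℤ} (hj : 0 ≤ j) : (fourierLp 2 j : L2) ∈ H2 := by
  have : (fourierLp 2 j : L2) = fourierLp 2 ((j.toNat : ℕ) : ℤ) := by
    rw [Int.toNat_of_nonneg hj]
  rw [this]
  exact Submodule.le_topologicalClosure _ (Submodule.subset_span ⟨j.toNat, rfl⟩)

lemma Mmul_fourierLp (n k : ℤ) :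
    Mmul (fourierLp ⊤ n) (fourierLp 2 k) = (fourierLp 2 (n + k) : L2) := by
  refine Lp.ext ?_
  filter_upwards [Mmul_coeFn (fourierLp ⊤ n) (fourierLp 2 k), coeFn_fourierLp ⊤ n,
    coeFn_fourierLp 2 k, coeFn_fourierLp 2 (n + k)] with z h1 h2 h3 h4
  rw [h1, h4]
  simp only [Pi.smul_apply, smul_eq_mul, Pi.mul_apply, h2, h3]
  rw [fourier_add]

lemma fourierLinf_unimod (n : ℤ) :
    ∀ᵐ z ∂μT, ‖(fourierLp ⊤ n : Linf) z‖ = 1 := by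
  filter_upwards [coeFn_fourierLp ⊤ n] with z hz
  rw [hz]
  exact Circle.norm_coe _

lemma exists_shift_mem_H2 {p : L2}
    (hp : p ∈ Submodule.span ℂ (Set.range (fourierLp 2 : ℤ → L2))) :
    ∃ n : ℕ, Mmul (fourierLp ⊤ (n : ℤ)) p ∈ H2 := by
  have key : ∃ n : ℕ, ∀ m : ℕ, n ≤ m → Mmul (fourierLp ⊤ (m : ℤ)) p ∈ H2 := by
    induction hp using Submodule.span_induction with
    | mem x hx =>
      obtain ⟨k, rfl⟩ := hx
      refine ⟨(-k).toNat, fun m hm => ?_⟩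
      rw [Mmul_fourierLp]
      refine fourierLp_mem_H2 ?_
      have : -k ≤ (m : ℤ) := le_trans (Int.self_le_toNat _) (by exact_mod_cast hm)
      omega
    | zero => exact ⟨0, fun m _ => by simp only [map_zero]; exact H2.zero_mem⟩
    | add x y _ _ hx hy =>
      obtain ⟨n₁, h₁⟩ := hx
      obtain ⟨n₂, h₂⟩ := hy
      exact ⟨max n₁ n₂, fun m hm => by
        rw [map_add]
        exact H2.add_mem (h₁ m (le_trans (le_max_left _ _) hm))
          (h₂ m (le_trans (le_max_right _ _) hm))⟩
    | smul a x _ hx =>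
      obtain ⟨n, h⟩ := hx
      exact ⟨n, fun m hm => by rw [_root_.map_smul]; exact H2.smul_mem a (h m hm)⟩
  obtain ⟨n, h⟩ := key
  exact ⟨n, h n le_rfl⟩

end Helpers


section EssHelpers

lemma ae_mem_essRan (φ : Linf) : ∀ᵐ z ∂μT, φ z ∈ essRan φ := by
  obtain ⟨s, hsc, hsd⟩ := TopologicalSpace.exists_countable_dense ℂ
  haveI : Countable s := hsc.to_subtype
  set bad : s × ℚ → Set 𝕋c := fun p =>
    if μT {z | ‖φ z - (p.1 : ℂ)‖ < (p.2 : ℝ)} = 0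
    then {z | ‖φ z - (p.1 : ℂ)‖ < (p.2 : ℝ)} else ∅ with hbad_def
  have hbad : ∀ p, μT (bad p) = 0 := by
    intro p
    by_cases h : μT {z | ‖φ z - (p.1 : ℂ)‖ < (p.2 : ℝ)} = 0
    · simpa [hbad_def, h] using h
    · simp [hbad_def, h]
  have hsub : {z | φ z ∈ essRan φ}ᶜ ⊆ ⋃ p, bad p := by
    intro z hz
    have hz' : ¬ (φ z ∈ essRan φ) := hz
    simp only [essRan, Set.mem_setOf_eq] at hz'
    push_neg at hz'
    obtain ⟨ε, hε, hμ⟩ := hz'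
    have h0 : μT {z' | ‖φ z' - φ z‖ < ε} = 0 := le_antisymm hμ (by positivity)
    obtain ⟨q, hqs, hqd⟩ := Metric.mem_closure_iff.mp (hsd (φ z)) (ε/4) (by linarith)
    obtain ⟨r, hr1, hr2⟩ := exists_rat_btwn (show ε/4 < ε/2 by linarith)
    have cond : μT {z' | ‖φ z' - q‖ < (r : ℝ)} = 0 := by
      refine measure_mono_null ?_ h0
      intro w hw
      have hw' : ‖φ w - q‖ < (r : ℝ) := hw
      have ht : ‖φ w - φ z‖ ≤ ‖φ w - q‖ + ‖q - φ z‖ :=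
        norm_sub_le_norm_sub_add_norm_sub (φ w) q (φ z)
      have hq : ‖q - φ z‖ < ε/4 := by
        rw [← Complex.dist_eq, dist_comm]; exact hqd
      show ‖φ w - φ z‖ < ε
      calc ‖φ w - φ z‖ ≤ _ := ht
        _ < (r : ℝ) + ε/4 := by exact add_lt_add hw' hq
        _ < ε := by linarith
    refine Set.mem_iUnion.2 ⟨(⟨q, hqs⟩, r), ?_⟩
    have : bad (⟨q, hqs⟩, r) = {z' | ‖φ z' - q‖ < (r : ℝ)} := by
      simp only [hbad_def]; rw [if_pos cond]
    rw [this]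
    show ‖φ z - q‖ < (r : ℝ)
    have : ‖φ z - q‖ < ε/4 := by rw [← Complex.dist_eq]; exact hqd
    linarith
  rw [Filter.eventually_iff, mem_ae_iff]
  exact measure_mono_null hsub (measure_iUnion_null hbad)

lemma abs_ae_bounded (φ : Linf) :
    Filter.IsBoundedUnder (· ≤ ·) (ae μT) (fun z => ‖φ z‖) :=
  ⟨‖φ‖, Filter.eventually_map.mpr (by
    filter_upwards [Linf_ae_bound φ] with z hz; exact hz)⟩

lemma le_essInfAbs_of_ae {φ : Linf} {c : ℝ} (h : ∀ᵐ z ∂μT, c ≤ ‖φ z‖) :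
    c ≤ essInfAbs φ := by
  have : c ≤ (ae μT).liminf (fun z => ‖φ z‖) :=
    Filter.le_liminf_of_le ((abs_ae_bounded φ).isCoboundedUnder_ge) h
  exact this

lemma essInfAbs_nonneg (φ : Linf) : 0 ≤ essInfAbs φ :=
  le_essInfAbs_of_ae (Filter.Eventually.of_forall fun z => norm_nonneg _)

lemma meas_abs_lt_ne_zero (φ : Linf) {ε : ℝ} (hε : 0 < ε) :
    μT {z | ‖φ z‖ < essInfAbs φ + ε} ≠ 0 := by
  intro h0
  have hae : ∀ᵐ z ∂μT, essInfAbs φ + ε ≤ ‖φ z‖ := by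
    rw [Filter.eventually_iff, mem_ae_iff]
    refine measure_mono_null ?_ h0
    intro z hz
    show ‖φ z‖ < essInfAbs φ + ε
    exact not_le.mp hz
  have := le_essInfAbs_of_ae hae
  linarith

end EssHelpers


section LeftIneq

lemma lintegral_nnnorm_sq_eq_one (f : L2) (hf : ‖f‖ = 1) :
    ∫⁻ z, ((‖f z‖₊ : ℝ≥0∞) ^ (2:ℕ)) ∂μT = 1 := by
  have h3 : eLpNorm ⇑f 2 μT ≠ ⊤ := Lp.eLpNorm_ne_top f
  have h1 : eLpNorm ⇑f 2 μT = 1 := by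
    have h2 := Lp.norm_def f
    rw [hf] at h2
    have h4 := ENNReal.ofReal_toReal h3
    rw [← h2] at h4
    simpa using h4.symm
  have h4 := eLpNorm_eq_lintegral_rpow_enorm_toReal (f := ⇑f) (μ := μT)
    (two_ne_zero) (ENNReal.ofNat_ne_top)
  rw [h1] at h4
  have htr : ((2:ℝ≥0∞).toReal) = (2:ℝ) := by simp
  rw [htr] at h4
  set X := ∫⁻ z, (‖f z‖ₑ ^ (2:ℝ)) ∂μT with hX
  have h5 : X = 1 := by
    have : (X ^ ((1:ℝ)/2)) ^ (2:ℝ) = (1:ℝ≥0∞) ^ (2:ℝ) := by rw [← h4]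
    rw [← ENNReal.rpow_mul, one_div, inv_mul_cancel₀ (two_ne_zero), ENNReal.rpow_one,
      ENNReal.one_rpow] at this
    exact this
  rw [← h5]
  apply lintegral_congr
  intro z
  rw [← ENNReal.rpow_natCast]
  norm_num [enorm_eq_nnnorm]

lemma inner_Mmul_eq_integral_withDensity (φ : Linf) (f : L2) :
    (inner ℂ f (Mmul φ f) : ℂ)
      = ∫ z, φ z ∂(μT.withDensity fun z => ((‖f z‖₊ ^ (2:ℕ) : NNReal) : ℝ≥0∞)) := by
  have hd : Measurable fun z => (‖f z‖₊ ^ (2:ℕ) : NNReal) :=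
    ((Lp.stronglyMeasurable f).measurable.nnnorm).pow_const 2
  rw [integral_withDensity_eq_integral_smul hd ⇑φ, L2.inner_def]
  apply integral_congr_ae
  filter_upwards [Mmul_coeFn φ f] with z hz
  rw [hz]
  rw [RCLike.inner_apply']
  show (starRingEnd ℂ) (f z) * ((⇑φ • ⇑f) z) = _
  rw [NNReal.smul_def, Complex.real_smul]
  push_cast
  simp only [Pi.smul_apply, smul_eq_mul, Pi.mul_apply, coe_nnnorm]
  rw [show (starRingEnd ℂ) (f z) * (φ z * f z) = (f z * (starRingEnd ℂ) (f z)) * φ z by ring,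
    Complex.mul_conj]
  rw [← Complex.sq_norm]
  push_cast
  ring

lemma infDist_le_norm_Dop_apply (u φ : Linf) (x : KuP u) (hx : ‖x‖ = 1) :
    Metric.infDist (0 : ℂ) (convexHull ℝ (essRan φ)) ≤ ‖Dop u φ x‖ := by
  set f : L2 := (x : L2) with hfdef
  have hf1 : ‖f‖ = 1 := hx
  have hd : Measurable fun z => (‖f z‖₊ ^ (2:ℕ) : NNReal) :=
    ((Lp.stronglyMeasurable f).measurable.nnnorm).pow_const 2
  set ν : Measure 𝕋c := μT.withDensity fun z => ((‖f z‖₊ ^ (2:ℕ) : NNReal) : ℝ≥0∞) with hν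
  have hν_ac : ν ≪ μT := withDensity_absolutelyContinuous _ _
  have hν_prob : IsProbabilityMeasure ν := by
    constructor
    rw [hν, withDensity_apply _ MeasurableSet.univ, setLIntegral_univ]
    rw [← lintegral_nnnorm_sq_eq_one f hf1]
    apply lintegral_congr
    intro z
    push_cast
    ring
  set S := closure (convexHull ℝ (essRan φ)) with hS
  have hae : ∀ᵐ z ∂ν, φ z ∈ S := by
    refine Filter.Eventually.filter_mono hν_ac.ae_le ?_
    filter_upwards [ae_mem_essRan φ] with z hz
    exact subset_closure (subset_convexHull ℝ _ hz)
  have hint : Integrable ⇑φ ν := by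
    refine Integrable.mono' (integrable_const ‖φ‖)
      (AEStronglyMeasurable.mono_ac hν_ac (Lp.aestronglyMeasurable φ)) ?_
    exact Filter.Eventually.filter_mono hν_ac.ae_le (Linf_ae_bound φ)
  have hmemS : ∫ z, φ z ∂ν ∈ S :=
    Convex.integral_mem ((convex_convexHull ℝ _).closure) isClosed_closure hae hint
  have h1 : Metric.infDist (0 : ℂ) (convexHull ℝ (essRan φ)) ≤ ‖∫ z, φ z ∂ν‖ := by
    rw [← Metric.infDist_closure]
    have := Metric.infDist_le_dist_of_mem (x := (0:ℂ)) hmemS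
    rwa [dist_zero_left] at this
  have h2 : ∫ z, φ z ∂ν = (inner ℂ f (Mmul φ f) : ℂ) :=
    (inner_Mmul_eq_integral_withDensity φ f).symm
  have h3 : (inner ℂ f (Mmul φ f) : ℂ) = (inner ℂ x (Dop u φ x) : ℂ) := by
    rw [Submodule.coe_inner]
    have hDx : ((Dop u φ x : KuP u) : L2)
        = (Submodule.orthogonalProjectionOnto (KuP u) (Mmul φ f) : L2) := rfl
    rw [hDx]
    have horth : Mmul φ f - (Submodule.orthogonalProjectionOnto (KuP u) (Mmul φ f) : L2) ∈ (KuP u)ᗮ :=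
      Submodule.sub_starProjection_mem_orthogonal _
    have hz := Submodule.inner_right_of_mem_orthogonal x.2 horth
    rw [inner_sub_right] at hz
    rw [← sub_eq_zero]
    exact hz
  calc Metric.infDist (0 : ℂ) (convexHull ℝ (essRan φ)) ≤ ‖∫ z, φ z ∂ν‖ := h1
    _ = ‖(inner ℂ x (Dop u φ x) : ℂ)‖ := by rw [h2, h3]
    _ ≤ ‖x‖ * ‖Dop u φ x‖ := norm_inner_le_norm (𝕜 := ℂ) x (Dop u φ x)
    _ = ‖Dop u φ x‖ := by rw [hx, one_mul]

end LeftIneq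


section RightIneq

lemma norm_Mmul_le_of_bound (φ : Linf) (f : L2) {c : ℝ} (hc : 0 ≤ c)
    (h : ∀ᵐ z ∂μT, ‖φ z * f z‖ ≤ c * ‖f z‖) : ‖Mmul φ f‖ ≤ c * ‖f‖ := by
  have hmono : eLpNorm ⇑(Mmul φ f) 2 μT ≤ eLpNorm ((c : ℝ) • ⇑f) 2 μT := by
    rw [eLpNorm_congr_ae (Mmul_coeFn φ f)]
    apply eLpNorm_mono_ae
    filter_upwards [h] with z hz
    simpa [Pi.smul_apply, norm_smul, Real.norm_eq_abs, _root_.abs_of_nonneg hc] using hz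
  rw [eLpNorm_const_smul] at hmono
  rw [Lp.norm_def, Lp.norm_def]
  calc (eLpNorm ⇑(Mmul φ f) 2 μT).toReal
      ≤ ((‖(c:ℝ)‖₊ : ℝ≥0∞) * eLpNorm ⇑f 2 μT).toReal :=
        ENNReal.toReal_mono (ENNReal.mul_ne_top ENNReal.coe_ne_top (Lp.eLpNorm_ne_top f)) hmono
    _ = c * (eLpNorm ⇑f 2 μT).toReal := by
        rw [ENNReal.toReal_mul, ENNReal.coe_toReal, coe_nnnorm, Real.norm_eq_abs,
          _root_.abs_of_nonneg hc]

lemma minMod_nonneg (u φ : Linf) : 0 ≤ minMod (Dop u φ) :=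
  Real.iInf_nonneg fun x => norm_nonneg _

lemma bddBelow_minMod (u φ : Linf) :
    BddBelow (Set.range fun x : {x : KuP u // ‖x‖ = 1} => ‖Dop u φ x.1‖) :=
  ⟨0, fun y hy => by obtain ⟨x, rfl⟩ := hy; exact norm_nonneg _⟩

lemma minMod_le_essInfAbs (u φ : Linf) (hu : IsInnerFn u) :
    minMod (Dop u φ) ≤ essInfAbs φ := by
  set M := minMod (Dop u φ) with hM
  set m := essInfAbs φ with hm
  have hM0 : 0 ≤ M := minMod_nonneg u φ
  have hm0 : 0 ≤ m := essInfAbs_nonneg φ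
  have hC0 : 0 ≤ ‖φ‖ := norm_nonneg φ
  have key : ∀ ε : ℝ, 0 < ε → ∀ δ : ℝ, 0 < δ → δ < 1 →
      M * (1 - δ) ≤ m + ε + ‖φ‖ * δ := by
    intro ε hε δ hδ0 hδ1
    set A := {z : 𝕋c | ‖φ z‖ < m + ε} with hA
    have hAmeas : MeasurableSet A := by
      have : A = (fun z => ‖φ z‖) ⁻¹' (Set.Iio (m + ε)) := by
        ext z; simp [hA]
      rw [this]
      exact ((Lp.stronglyMeasurable φ).measurable.norm) measurableSet_Iio
    have hA0 : μT A ≠ 0 := meas_abs_lt_ne_zero φ hε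
    have hAtop : μT A ≠ ⊤ := measure_ne_top _ _
    set g : L2 := indicatorConstLp 2 hAmeas hAtop (1 : ℂ) with hg
    have hgpos : 0 < ‖g‖ := by
      rw [norm_pos_iff]
      intro h0
      have hnorm := norm_indicatorConstLp (p := 2) (μ := μT)
        (two_ne_zero) (ENNReal.ofNat_ne_top) (c := (1:ℂ)) (hs := hAmeas) (hμs := hAtop)
      rw [← hg, h0, norm_zero] at hnorm
      have h1 : (μT A).toReal ≠ 0 := by
        simp only [ne_eq, ENNReal.toReal_eq_zero_iff]
        push_neg; exact ⟨hA0, hAtop⟩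
      have h1' : 0 < (μT A).toReal :=
        lt_of_le_of_ne ENNReal.toReal_nonneg (Ne.symm h1)
      have h2 : (μT A).toReal ^ ((1:ℝ)/(2:ℝ≥0∞).toReal) ≠ 0 :=
        (Real.rpow_pos_of_pos h1' _).ne'
      simp only [norm_one, one_mul] at hnorm
      exact h2 hnorm.symm
    set f : L2 := ((‖g‖⁻¹ : ℝ) : ℂ) • g with hf
    have hf1 : ‖f‖ = 1 := by
      rw [hf, norm_smul, Complex.norm_real, Real.norm_eq_abs,
        abs_of_pos (inv_pos.mpr hgpos), inv_mul_cancel₀ hgpos.ne']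
    have hφf : ‖Mmul φ f‖ ≤ m + ε := by
      have hb := norm_Mmul_le_of_bound φ f (c := m + ε) (by linarith) ?_
      · rwa [hf1, mul_one] at hb
      · filter_upwards [Lp.coeFn_smul ((‖g‖⁻¹ : ℝ) : ℂ) g,
          indicatorConstLp_coeFn (p := 2) (μ := μT) (hs := hAmeas) (hμs := hAtop)
            (c := (1:ℂ))] with z h1 h2
        by_cases hz : f z = 0
        · rw [hz, mul_zero, norm_zero]
          positivity
        · have hzA : z ∈ A := by
            by_contra hzA
            apply hz
            have hfz : f z = (((‖g‖⁻¹ : ℝ) : ℂ) • ⇑g) z := h1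
            rw [hfz, Pi.smul_apply, h2, Set.indicator_of_notMem hzA, smul_zero]
          have hlt : ‖φ z‖ < m + ε := hzA
          rw [norm_mul]
          apply mul_le_mul_of_nonneg_right _ (norm_nonneg _)
          exact le_of_lt hlt
    -- approximate f by a trigonometric polynomial
    have hfcl : f ∈ closure ((Submodule.span ℂ (Set.range (fourierLp 2 : ℤ → L2))) : Set L2) := by
      have htop := span_fourierLp_closure_eq_top (T := 2 * Real.pi) (p := 2) (ENNReal.ofNat_ne_top)
      have hmem : f ∈ (Submodule.span ℂ (Set.range (fourierLp 2 : ℤ → L2))).topologicalClosure := by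
        rw [htop]; trivial
      exact hmem
    obtain ⟨p, hpmem, hpdist⟩ := Metric.mem_closure_iff.mp hfcl δ hδ0
    have hfp : ‖f - p‖ < δ := by rwa [dist_eq_norm] at hpdist
    obtain ⟨n, hn⟩ := exists_shift_mem_H2 hpmem
    set en : Linf := fourierLp ⊤ (n : ℤ) with hen_def
    have hen := fourierLinf_unimod (n : ℤ)
    set h : L2 := Mmul en p with hh
    have hH2 : h ∈ H2 := hn
    have hhnorm : 1 - δ ≤ ‖h‖ := by
      rw [hh, norm_Mmul_of_unimod hen p]
      have h8 := norm_sub_norm_le f p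
      rw [hf1] at h8
      linarith
    have hφh : ‖Mmul φ h‖ ≤ m + ε + ‖φ‖ * δ := by
      have hsplit : Mmul φ h = Mmul φ (Mmul en f) - Mmul φ (Mmul en (f - p)) := by
        rw [hh, ← map_sub, ← map_sub, sub_sub_cancel]
      rw [hsplit]
      have e1 : ‖Mmul φ (Mmul en f)‖ = ‖Mmul φ f‖ := norm_Mmul_Mmul_unimod hen φ f
      have e2 : ‖Mmul φ (Mmul en (f - p))‖ = ‖Mmul φ (f - p)‖ := norm_Mmul_Mmul_unimod hen φ _
      have e3 : ‖Mmul φ (f - p)‖ ≤ ‖φ‖ * ‖f - p‖ := norm_Mmul_apply_le φ _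
      have e4 : ‖φ‖ * ‖f - p‖ ≤ ‖φ‖ * δ := mul_le_mul_of_nonneg_left hfp.le hC0
      calc ‖Mmul φ (Mmul en f) - Mmul φ (Mmul en (f - p))‖
          ≤ ‖Mmul φ (Mmul en f)‖ + ‖Mmul φ (Mmul en (f - p))‖ := norm_sub_le _ _
        _ ≤ m + ε + ‖φ‖ * δ := by rw [e1, e2]; linarith
    have hhpos : 0 < ‖h‖ := lt_of_lt_of_le (by linarith) hhnorm
    set w : L2 := Mmul u h with hw
    have hw_mem : w ∈ KuP u := uH2_le_KuP u ⟨h, hH2, rfl⟩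
    have hwnorm : ‖w‖ = ‖h‖ := norm_Mmul_of_unimod hu.unimod h
    set v : KuP u := ((‖h‖⁻¹ : ℝ) : ℂ) • (⟨w, hw_mem⟩ : KuP u) with hv_def
    have hwnorm' : ‖(⟨w, hw_mem⟩ : KuP u)‖ = ‖h‖ := hwnorm
    have hvnorm : ‖v‖ = 1 := by
      rw [hv_def, norm_smul, Complex.norm_real, Real.norm_eq_abs,
        abs_of_pos (inv_pos.mpr hhpos), hwnorm', inv_mul_cancel₀ hhpos.ne']
    have hMv : M ≤ ‖Dop u φ v‖ := by
      rw [hM]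
      unfold minMod
      exact ciInf_le (bddBelow_minMod u φ) ⟨v, hvnorm⟩
    have hDv : ‖Dop u φ v‖ * ‖h‖ ≤ ‖Mmul φ h‖ := by
      have h5 : Dop u φ v = ((‖h‖⁻¹:ℝ):ℂ) • Dop u φ ⟨w, hw_mem⟩ := by
        rw [hv_def, _root_.map_smul]
      have h6 : ‖Dop u φ (⟨w, hw_mem⟩ : KuP u)‖ ≤ ‖Mmul φ w‖ := by
        have hDw : Dop u φ (⟨w, hw_mem⟩ : KuP u)
            = Submodule.orthogonalProjectionOnto (KuP u) (Mmul φ w) := rfl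
        rw [hDw]
        calc ‖Submodule.orthogonalProjectionOnto (KuP u) (Mmul φ w)‖
            ≤ ‖Submodule.orthogonalProjectionOnto (KuP u)‖ * ‖Mmul φ w‖ :=
              ContinuousLinearMap.le_opNorm _ _
          _ ≤ 1 * ‖Mmul φ w‖ :=
              mul_le_mul_of_nonneg_right (Submodule.orthogonalProjectionOnto_norm_le _) (norm_nonneg _)
          _ = ‖Mmul φ w‖ := one_mul _
      have h7 : ‖Mmul φ w‖ = ‖Mmul φ h‖ := norm_Mmul_Mmul_unimod hu.unimod φ h
      rw [h5, norm_smul, Complex.norm_real, Real.norm_eq_abs,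
        abs_of_pos (inv_pos.mpr hhpos)]
      have h9 : ‖h‖⁻¹ * ‖Dop u φ (⟨w, hw_mem⟩ : KuP u)‖ * ‖h‖
          = ‖Dop u φ (⟨w, hw_mem⟩ : KuP u)‖ := by
        field_simp
      rw [h9, ← h7]
      exact h6
    calc M * (1 - δ) ≤ M * ‖h‖ := mul_le_mul_of_nonneg_left hhnorm hM0
      _ ≤ ‖Dop u φ v‖ * ‖h‖ := mul_le_mul_of_nonneg_right hMv (norm_nonneg _)
      _ ≤ ‖Mmul φ h‖ := hDv
      _ ≤ m + ε + ‖φ‖ * δ := hφh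
  -- conclude
  apply le_of_forall_pos_le_add
  intro η hη
  set δ := min (1/2 : ℝ) (η / (2 * (‖φ‖ + M + 1))) with hδ
  have hδ0 : 0 < δ := lt_min (by norm_num) (div_pos hη (by positivity))
  have hδ1 : δ < 1 := lt_of_le_of_lt (min_le_left _ _) (by norm_num)
  have hkey := key (η/2) (by positivity) δ hδ0 hδ1
  have hδ2 : δ ≤ η / (2 * (‖φ‖ + M + 1)) := min_le_right _ _
  have h3 : (‖φ‖ + M) * δ ≤ (‖φ‖ + M) * (η / (2 * (‖φ‖ + M + 1))) :=
    mul_le_mul_of_nonneg_left hδ2 (by linarith)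
  have h4 : (‖φ‖ + M) * (η / (2 * (‖φ‖ + M + 1))) ≤ η / 2 := by
    have hpos : (0:ℝ) < ‖φ‖ + M + 1 := by positivity
    have heq : (‖φ‖ + M + 1) * (η / (2 * (‖φ‖ + M + 1))) = η / 2 := by
      field_simp
    calc (‖φ‖ + M) * (η / (2 * (‖φ‖ + M + 1)))
        ≤ (‖φ‖ + M + 1) * (η / (2 * (‖φ‖ + M + 1))) :=
          mul_le_mul_of_nonneg_right (by linarith) (by positivity)
      _ = η / 2 := heq
  nlinarith [hkey, h3, h4]

end RightIneq

/-- For a normal dual truncated Toeplitz operator `D_φ`: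
`dist(0, convexHull(ess ran φ)) ≤ m(D_φ) ≤ ess inf |φ|`. -/
theorem minMod_normal_DTTO_bounds (u φ : Linf) (hu : IsInnerFn u) (hnc : Nonconst u)
    (hnormal : ContinuousLinearMap.adjoint (Dop u φ) ∘L Dop u φ
        = Dop u φ ∘L ContinuousLinearMap.adjoint (Dop u φ)) :
    Metric.infDist (0 : ℂ) (convexHull ℝ (essRan φ)) ≤ minMod (Dop u φ)
    ∧ minMod (Dop u φ) ≤ essInfAbs φ := by
  constructor
  · have hmem : (fourierLp 2 (-1 : ℤ) : L2) ∈ KuP u := Hminus_le_KuP u em1_mem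
    have h1 : ‖(fourierLp 2 (-1 : ℤ) : L2)‖ = 1 := by
      have hcoe := congrFun (coe_fourierBasis (T := 2 * Real.pi)) (-1 : ℤ)
      rw [← hcoe]
      exact (fourierBasis (T := 2 * Real.pi)).orthonormal.1 (-1 : ℤ)
    haveI : Nonempty {x : KuP u // ‖x‖ = 1} := ⟨⟨⟨_, hmem⟩, h1⟩⟩
    unfold minMod
    exact le_ciInf fun x => infDist_le_norm_Dop_apply u φ x.1 x.2
  · exact minMod_le_essInfAbs u φ hu

end DTTO
end
end
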